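/- arXiv:2402.11787 — 7 statements merged into one kernel-verified Lean document; each statement's English description precedes it below -/
import Mathlib

section
/- Let d, n be positive integers, let -1 ≤ β < α < 1 with β < 0, and set μ = (1-β)/(α-β). Let S = {u₁,…,uₙ} be a spherical {α,β}-code in ℝ^d of rank r, and let A be the adjacency matrix of the associated α-graph Γ_α(S). Then the all-ones vector j lies in the column space of A + μI; moreover, for every {1}-inverse N of A + μI one has jᵀNj ≤ (α-β)/(-β), and rank(A + μI) = r + 1 if jᵀNj = (α-β)/(-β), while rank(A + μI) = r otherwise. -/
open Matrix

noncomputable section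

/-- The real inner product on `ℝ^d`. -/
def rinner {d : ℕ} (x y : EuclideanSpace ℝ (Fin d)) : ℝ := inner ℝ x y

lemma rinner_comm {d : ℕ} (x y : EuclideanSpace ℝ (Fin d)) : rinner x y = rinner y x :=
  real_inner_comm y x

/-- A spherical `{α, β}`-code in `ℝ^d`: a family of unit vectors whose pairwise inner
products of distinct vectors lie in `{α, β}`. -/
def IsSphericalCode (α β : ℝ) {d n : ℕ} (u : Fin n → EuclideanSpace ℝ (Fin d)) : Prop :=
  (∀ i, ‖u i‖ = 1) ∧ ∀ i j, i ≠ j → rinner (u i) (u j) = α ∨ rinner (u i) (u j) = β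

/-- Adjacency matrix of the associated `α`-graph `Γ_α(S)`. -/
def alphaAdj (α : ℝ) {d n : ℕ} (u : Fin n → EuclideanSpace ℝ (Fin d)) :
    Matrix (Fin n) (Fin n) ℝ :=
  Matrix.of fun i j => if i ≠ j ∧ rinner (u i) (u j) = α then 1 else 0

/-- The associated `α`-graph `Γ_α(S)` of a family of vectors: distinct vectors are
adjacent iff their inner product is `α`. -/
def alphaGraph (α : ℝ) {d n : ℕ} (u : Fin n → EuclideanSpace ℝ (Fin d)) :
    SimpleGraph (Fin n) where
  Adj i j := i ≠ j ∧ rinner (u i) (u j) = α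
  symm := ⟨fun i j h => ⟨h.1.symm, by rw [rinner_comm]; exact h.2⟩⟩
  loopless := ⟨fun i h => h.1 rfl⟩

/-- For a symmetric real matrix, a vector orthogonal to the kernel is in the range. -/
lemma exists_mulVec_eq' {n : ℕ} (M : Matrix (Fin n) (Fin n) ℝ) (hs : Mᵀ = M)
    (v : Fin n → ℝ) (h : ∀ x, M *ᵥ x = 0 → v ⬝ᵥ x = 0) : ∃ y, M *ᵥ y = v := by
  by_contra hv
  push_neg at hv
  have hv' : v ∉ LinearMap.range M.mulVecLin := by
    rw [LinearMap.mem_range]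
    push_neg
    intro y
    simpa using hv y
  obtain ⟨f, hf0, hfbot⟩ :=
    (LinearMap.range M.mulVecLin).exists_dual_map_eq_bot_of_notMem hv' inferInstance
  set w : Fin n → ℝ := fun i => f (fun k => if i = k then 1 else 0) with hw
  have hfx : ∀ x : Fin n → ℝ, f x = w ⬝ᵥ x := by
    intro x
    rw [LinearMap.pi_apply_eq_sum_univ f x]
    simp [dotProduct, hw, mul_comm]
  have hvm : w ᵥ* M = M *ᵥ w := by
    conv_lhs => rw [← hs]
    rw [Matrix.vecMul_transpose]
  have hzero : ∀ x, (M *ᵥ w) ⬝ᵥ x = 0 := by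
    intro x
    have hmem : M *ᵥ x ∈ LinearMap.range M.mulVecLin := ⟨x, rfl⟩
    have h1 : f (M *ᵥ x) = 0 := by
      have h2 := Submodule.mem_map_of_mem (f := f) hmem
      rw [hfbot] at h2
      simpa using h2
    rw [hfx, Matrix.dotProduct_mulVec, hvm] at h1
    exact h1
  have hMw : M *ᵥ w = 0 := by
    funext i
    have := hzero (Pi.single i 1)
    rw [dotProduct_single] at this
    simpa using this
  have : v ⬝ᵥ w = 0 := h w hMw
  rw [hfx v, dotProduct_comm] at hf0
  exact hf0 this


set_option maxHeartbeats 1000000 in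
/-- for a spherical `{α,β}`-code of rank `r` with `β < 0` and
`μ = (1-β)/(α-β)`, the all-ones vector lies in the column space of `A + μI`, every
`{1}`-inverse `N` of `A + μI` satisfies `jᵀNj ≤ (α-β)/(-β)`, and `rank (A + μI)` is
`r + 1` if `jᵀNj = (α-β)/(-β)` and `r` otherwise. -/
theorem stmt1 (d n : ℕ) (hd : 0 < d) (hn : 0 < n)
    (α β μ : ℝ) (hβ₁ : -1 ≤ β) (hβα : β < α) (hα : α < 1) (hβ₀ : β < 0)
    (hμ : μ = (1 - β) / (α - β))
    (u : Fin n → EuclideanSpace ℝ (Fin d)) (hu : IsSphericalCode α β u)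
    (r : ℕ) (hr : r = Module.finrank ℝ (Submodule.span ℝ (Set.range u)))
    (M : Matrix (Fin n) (Fin n) ℝ)
    (hM : M = alphaAdj α u + μ • (1 : Matrix (Fin n) (Fin n) ℝ)) :
    (∃ x : Fin n → ℝ, M *ᵥ x = fun _ => 1) ∧
    ∀ N : Matrix (Fin n) (Fin n) ℝ, M * N * M = M →
      (fun _ => (1 : ℝ)) ⬝ᵥ (N *ᵥ fun _ => 1) ≤ (α - β) / (-β) ∧
      M.rank =
        (if (fun _ => (1 : ℝ)) ⬝ᵥ (N *ᵥ fun _ => 1) = (α - β) / (-β) then r + 1 else r) := by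
  have hab : (0:ℝ) < α - β := sub_pos.mpr hβα
  have hnb : (0:ℝ) < -β := neg_pos.mpr hβ₀
  set j : Fin n → ℝ := fun _ => (1:ℝ) with hj
  set G : Matrix (Fin n) (Fin n) ℝ := Matrix.of fun i p => rinner (u i) (u p) with hG
  set B : Matrix (Fin d) (Fin n) ℝ := Matrix.of (fun k i => (u i : Fin d → ℝ) k) with hB
  have hGB : G = Bᴴ * B := by
    ext i p
    simp only [hG, hB, Matrix.of_apply, Matrix.mul_apply, Matrix.conjTranspose_apply,
      star_trivial]
    simp [rinner, PiLp.inner_apply, RCLike.inner_apply, conj_trivial, mul_comm]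
  have hGsym : Gᵀ = G := by
    ext i p
    simp only [Matrix.transpose_apply, hG, Matrix.of_apply]
    exact rinner_comm (u p) (u i)
  have hGpsd : G.PosSemidef := hGB ▸ Matrix.posSemidef_conjTranspose_mul_self B
  have hGrank : G.rank = r := by
    rw [hGB, Matrix.rank_conjTranspose_mul_self, Matrix.rank_eq_finrank_span_cols, hr]
    have hmap : Submodule.span ℝ (Set.range B.col)
        = (Submodule.span ℝ (Set.range u)).map
          (WithLp.linearEquiv 2 ℝ (Fin d → ℝ) : EuclideanSpace ℝ (Fin d) →ₗ[ℝ] (Fin d → ℝ)) := by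
      rw [Submodule.map_span]
      congr 1
      rw [← Set.range_comp]
      rfl
    rw [hmap, LinearEquiv.finrank_map_eq]
  set J : Matrix (Fin n) (Fin n) ℝ := Matrix.of (fun _ _ => (1:ℝ)) with hJ
  have hkey : (α - β) • M = G + (-β) • J := by
    ext i p
    simp only [hM, Matrix.smul_apply, Matrix.add_apply, Matrix.of_apply, smul_eq_mul,
      alphaAdj, Matrix.one_apply, hG, hJ]
    by_cases hip : i = p
    · subst hip
      have h1 : rinner (u i) (u i) = 1 := by
        rw [rinner, real_inner_self_eq_norm_sq, hu.1 i, one_pow]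
      simp only [ne_eq, not_true_eq_false, false_and, if_false, if_pos rfl, h1, hμ]
      simp only [if_true]
      field_simp
      ring
    · rcases hu.2 i p hip with h | h
      · simp only [ne_eq, hip, not_false_eq_true, true_and, h, if_pos rfl, if_neg hip,
          if_true, if_false]
        ring
      · have hne : ¬ (i ≠ p ∧ rinner (u i) (u p) = α) := by
          rintro ⟨-, h2⟩
          rw [h] at h2
          exact hβα.ne h2
        simp only [if_neg hne, if_neg hip]
        rw [h]
        ring
  have hMsym : Mᵀ = M := by
    have h2 : (α - β) • Mᵀ = (α - β) • M := by
      rw [← Matrix.transpose_smul, hkey, Matrix.transpose_add, Matrix.transpose_smul, hGsym]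
      rfl
    exact smul_right_injective _ hab.ne' h2
  -- symmetric vecMul
  have vmG : ∀ x, x ᵥ* G = G *ᵥ x := by
    intro x
    conv_lhs => rw [← hGsym]
    rw [Matrix.vecMul_transpose]
  have vmM : ∀ x, x ᵥ* M = M *ᵥ x := by
    intro x
    conv_lhs => rw [← hMsym]
    rw [Matrix.vecMul_transpose]
  -- key vector identity
  have hJv : ∀ x : Fin n → ℝ, J *ᵥ x = (j ⬝ᵥ x) • j := by
    intro x
    funext i
    simp [hJ, hj, Matrix.mulVec, dotProduct]
  have hkeyv : ∀ x, (α - β) • (M *ᵥ x) = G *ᵥ x + ((-β) * (j ⬝ᵥ x)) • j := by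
    intro x
    have h1 := congrArg (fun P => P *ᵥ x) hkey
    simp only [Matrix.add_mulVec, Matrix.smul_mulVec] at h1
    rw [h1, hJv x, smul_smul]
  -- quadratic form identity
  have hquad : ∀ x, (α - β) * (x ⬝ᵥ (M *ᵥ x)) = x ⬝ᵥ (G *ᵥ x) + (-β) * (j ⬝ᵥ x)^2 := by
    intro x
    have h1 := congrArg (fun v => x ⬝ᵥ v) (hkeyv x)
    simp only [dotProduct_smul, dotProduct_add, smul_eq_mul] at h1
    rw [h1, dotProduct_comm x j]
    ring
  have hGq0 : ∀ x, 0 ≤ x ⬝ᵥ (G *ᵥ x) := by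
    intro x
    have := hGpsd.dotProduct_mulVec_nonneg x
    simpa using this
  have hGzero : ∀ x, x ⬝ᵥ (G *ᵥ x) = 0 → G *ᵥ x = 0 := by
    intro x h
    exact (hGpsd.dotProduct_mulVec_zero_iff x).mp (by simpa using h)
  have hjne : j ≠ 0 := by
    intro h
    have := congrFun h ⟨0, hn⟩
    simp [hj] at this
  have hker : ∀ x, M *ᵥ x = 0 → G *ᵥ x = 0 ∧ j ⬝ᵥ x = 0 := by
    intro x hx
    have hq := hquad x
    rw [hx, dotProduct_zero, mul_zero] at hq
    have hq0 : x ⬝ᵥ (G *ᵥ x) = 0 := by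
      nlinarith [hGq0 x, mul_nonneg hnb.le (sq_nonneg (j ⬝ᵥ x))]
    have hjx : j ⬝ᵥ x = 0 := by
      have hsq : (j ⬝ᵥ x)^2 = 0 := by nlinarith [hGq0 x]
      exact pow_eq_zero_iff two_ne_zero |>.mp hsq
    exact ⟨hGzero x hq0, hjx⟩
  have hjmem : ∃ x, M *ᵥ x = j :=
    exists_mulVec_eq' M hMsym j (fun x hx => (hker x hx).2)
  have hGdot : ∀ y x, (G *ᵥ y) ⬝ᵥ x = y ⬝ᵥ (G *ᵥ x) := by
    intro y x
    rw [dotProduct_comm, Matrix.dotProduct_mulVec, vmG]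
    exact dotProduct_comm _ _
  have hGsub : ∀ y, ∃ z, M *ᵥ z = G *ᵥ y := by
    intro y
    apply exists_mulVec_eq' M hMsym
    intro x hx
    rw [hGdot y x, (hker x hx).1, dotProduct_zero]
  obtain ⟨x₀, hx₀⟩ := hjmem
  refine ⟨⟨x₀, hx₀⟩, ?_⟩
  intro N hN
  set s : ℝ := j ⬝ᵥ x₀ with hs
  have hxj : x₀ ⬝ᵥ j = s := by rw [hs]; exact dotProduct_comm x₀ j
  have hts : j ⬝ᵥ (N *ᵥ j) = s := by
    have h1 : j ⬝ᵥ (N *ᵥ j) = (x₀ ᵥ* M) ⬝ᵥ (N *ᵥ (M *ᵥ x₀)) := by rw [vmM, hx₀]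
    rw [h1, ← Matrix.dotProduct_mulVec, Matrix.mulVec_mulVec, Matrix.mulVec_mulVec,
      hN, hx₀, hxj]
  have hq2 := hquad x₀
  rw [hx₀, hxj, ← hs] at hq2
  have hqs : x₀ ⬝ᵥ (G *ᵥ x₀) = (α - β) * s + β * s^2 := by linarith
  have hs_pos : 0 < s := by
    have hsnn : 0 ≤ s := by nlinarith [hGq0 x₀, sq_nonneg s]
    rcases hsnn.lt_or_eq with h | h
    · exact h
    · exfalso
      have hq0 : x₀ ⬝ᵥ (G *ᵥ x₀) = 0 := by rw [hqs, ← h]; ring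
      have hG0 : G *ᵥ x₀ = 0 := hGzero x₀ hq0
      have h3 := hkeyv x₀
      rw [hx₀, hG0, ← hs, ← h] at h3
      have h3' : (α - β) • j = 0 := by simpa using h3
      rcases smul_eq_zero.mp h3' with h' | h'
      · exact hab.ne' h'
      · exact hjne h'
  have hsle : s ≤ (α - β) / (-β) := by
    rw [le_div_iff₀ hnb]
    nlinarith [hGq0 x₀, hqs, hs_pos]
  -- rank computation
  have hrank_def : ∀ P : Matrix (Fin n) (Fin n) ℝ,
      P.rank = Module.finrank ℝ (LinearMap.range P.mulVecLin) := fun _ => rfl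
  have hM_eq_x : ∀ x, M *ᵥ x = (α - β)⁻¹ • (G *ᵥ x + ((-β) * (j ⬝ᵥ x)) • j) := by
    intro x
    rw [← hkeyv x, smul_smul, inv_mul_cancel₀ hab.ne', one_smul]
  have hrange_le : LinearMap.range G.mulVecLin ≤ LinearMap.range M.mulVecLin := by
    rintro v ⟨y, rfl⟩
    obtain ⟨z, hz⟩ := hGsub y
    exact ⟨z, by simpa [Matrix.mulVecLin_apply] using hz⟩
  have hjmemM : j ∈ LinearMap.range M.mulVecLin := ⟨x₀, by simpa using hx₀⟩
  refine ⟨by rw [hts]; exact hsle, ?_⟩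
  rw [hts]
  by_cases hcase : s = (α - β) / (-β)
  · rw [if_pos hcase]
    have hβs : α - β + β * s = 0 := by
      rw [hcase]
      field_simp [hβ₀.ne]
      ring
    have hq0 : x₀ ⬝ᵥ (G *ᵥ x₀) = 0 := by
      rw [hqs]
      have h5 : (α - β) * s + β * s^2 = s * (α - β + β * s) := by ring
      rw [h5, hβs, mul_zero]
    have hG0 : G *ᵥ x₀ = 0 := hGzero x₀ hq0
    have hjnot : j ∉ LinearMap.range G.mulVecLin := by
      rintro ⟨y, hy⟩
      have h6 : s = 0 := by
        rw [hs, ← show G *ᵥ y = j by simpa using hy, hGdot y x₀, hG0, dotProduct_zero]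
      exact hs_pos.ne' h6
    have hrangeM : LinearMap.range M.mulVecLin = LinearMap.range G.mulVecLin ⊔ (ℝ ∙ j) := by
      apply le_antisymm
      · rintro v ⟨x, rfl⟩
        rw [Matrix.mulVecLin_apply, hM_eq_x x]
        refine Submodule.smul_mem _ _ (Submodule.add_mem _ ?_ ?_)
        · exact Submodule.mem_sup_left ⟨x, rfl⟩
        · exact Submodule.mem_sup_right
            (Submodule.smul_mem _ _ (Submodule.mem_span_singleton_self j))
      · refine sup_le hrange_le ?_
        rwa [Submodule.span_singleton_le_iff_mem]
    have hinf : LinearMap.range G.mulVecLin ⊓ (ℝ ∙ j) = ⊥ := by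
      rw [eq_bot_iff]
      rintro v hv
      rw [Submodule.mem_inf] at hv
      obtain ⟨a, rfl⟩ := Submodule.mem_span_singleton.mp hv.2
      rcases eq_or_ne a 0 with ha | ha
      · simp [ha]
      · exfalso
        apply hjnot
        have : j = a⁻¹ • (a • j) := by rw [smul_smul, inv_mul_cancel₀ ha, one_smul]
        rw [this]
        exact Submodule.smul_mem _ _ hv.1
    have hfin := Submodule.finrank_sup_add_finrank_inf_eq
      (LinearMap.range G.mulVecLin) (ℝ ∙ j)
    rw [hinf, finrank_bot, add_zero, finrank_span_singleton hjne] at hfin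
    calc M.rank = Module.finrank ℝ (LinearMap.range M.mulVecLin) := hrank_def M
      _ = Module.finrank ℝ
            ((LinearMap.range G.mulVecLin ⊔ (ℝ ∙ j) : Submodule ℝ (Fin n → ℝ))) := by
          rw [hrangeM]
      _ = Module.finrank ℝ (LinearMap.range G.mulVecLin) + 1 := hfin
      _ = G.rank + 1 := by rw [hrank_def]
      _ = r + 1 := by rw [hGrank]
  · rw [if_neg hcase]
    have hslt : s < (α - β) / (-β) := lt_of_le_of_ne hsle hcase
    have hβs : 0 < α - β + β * s := by
      have h7 := (lt_div_iff₀ hnb).mp hslt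
      nlinarith
    have hjG : j ∈ LinearMap.range G.mulVecLin := by
      have h6 := hkeyv x₀
      rw [hx₀, ← hs] at h6
      have h5 : G *ᵥ x₀ = (α - β + β * s) • j := by
        have h8 := eq_sub_of_add_eq h6.symm
        rw [h8, ← sub_smul]
        congr 1
        ring
      refine ⟨(α - β + β * s)⁻¹ • x₀, ?_⟩
      rw [Matrix.mulVecLin_apply, Matrix.mulVec_smul, h5, smul_smul,
        inv_mul_cancel₀ hβs.ne', one_smul]
    have hrangeM : LinearMap.range M.mulVecLin = LinearMap.range G.mulVecLin := by
      apply le_antisymm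
      · rintro v ⟨x, rfl⟩
        rw [Matrix.mulVecLin_apply, hM_eq_x x]
        exact Submodule.smul_mem _ _
          (Submodule.add_mem _ ⟨x, rfl⟩ (Submodule.smul_mem _ _ hjG))
      · exact hrange_le
    calc M.rank = Module.finrank ℝ (LinearMap.range M.mulVecLin) := hrank_def M
      _ = Module.finrank ℝ (LinearMap.range G.mulVecLin) := by rw [hrangeM]
      _ = G.rank := (hrank_def G).symm
      _ = r := hGrank
end
end

section
/- Let -1 ≤ β < α < 1 with β < 0, and set μ = (1-β)/(α-β). Let G be an n-vertex graph with adjacency matrix A such that: A + μI is positive semidefinite, the all-ones vector j lies in the column space of A + μI, and jᵀNj ≤ (α-β)/(-β) for every {1}-inverse N of A + μI. Define r = rank(A + μI) - 1 if jᵀNj = (α-β)/(-β), and r = rank(A + μI) otherwise. Then there exists a spherical {α,β}-code S in ℝ^r of size n and rank r whose associated α-graph is G; that is, there are unit vectors u₁,…,uₙ in ℝ^r such that for all i ≠ j, uᵢ·uⱼ = α if vertices i and j are adjacent in G and uᵢ·uⱼ = β otherwise. -/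
open Matrix

noncomputable section

lemma exists_oneInv {n : ℕ} (M : Matrix (Fin n) (Fin n) ℝ) (hM : M.IsHermitian) :
    ∃ N : Matrix (Fin n) (Fin n) ℝ, M * N * M = M := by
  set U : Matrix (Fin n) (Fin n) ℝ := (hM.eigenvectorUnitary : Matrix (Fin n) (Fin n) ℝ) with hUdef
  set d : Fin n → ℝ := RCLike.ofReal ∘ hM.eigenvalues with hddef
  have hU1 : star U * U = 1 := by
    have := hM.eigenvectorUnitary.2
    rw [Unitary.mem_iff] at this
    exact this.1
  have hspec : M = U * diagonal d * star U := hM.spectral_theorem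
  refine ⟨U * diagonal (fun i => (d i)⁻¹) * star U, ?_⟩
  have key : ∀ e f : Fin n → ℝ,
      (U * diagonal e * star U) * (U * diagonal f * star U)
        = U * diagonal (fun i => e i * f i) * star U := by
    intro e f
    calc (U * diagonal e * star U) * (U * diagonal f * star U)
        = U * diagonal e * (star U * U) * diagonal f * star U := by
          simp only [Matrix.mul_assoc]
      _ = U * diagonal (fun i => e i * f i) * star U := by
          rw [hU1, Matrix.mul_one, Matrix.mul_assoc, Matrix.mul_assoc]
          rw [← Matrix.mul_assoc (diagonal e), Matrix.diagonal_mul_diagonal,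
            Matrix.mul_assoc]
  rw [hspec, key, key]
  congr 2
  funext i
  rcases eq_or_ne (d i) 0 with h | h
  · simp [h]
  · field_simp


open scoped MatrixOrder in
lemma psd_sqrt_exists {n : ℕ} (H : Matrix (Fin n) (Fin n) ℝ) (hH : H.PosSemidef) :
    ∃ T : Matrix (Fin n) (Fin n) ℝ, Tᴴ = T ∧ T * T = H :=
  ⟨CFC.sqrt H, (CFC.sqrt_nonneg H).posSemidef.1, CFC.sqrt_mul_sqrt_self H hH.nonneg⟩

lemma gram_to_code {n r : ℕ} (H : Matrix (Fin n) (Fin n) ℝ) (hH : H.PosSemidef)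
    (hrank : H.rank = r) :
    ∃ u : Fin n → EuclideanSpace ℝ (Fin r),
      (Module.finrank ℝ (Submodule.span ℝ (Set.range u)) = r) ∧
      ∀ i k, (inner ℝ (u i) (u k) : ℝ) = H i k := by
  classical
  obtain ⟨T, hTsym, hTT⟩ := psd_sqrt_exists H hH
  have hsym : ∀ a b, T a b = T b a := by
    intro a b
    conv_lhs => rw [← hTsym]
    simp [Matrix.conjTranspose_apply]
  have hrT : T.rank = r := by
    have h1 : (Tᴴ * T).rank = T.rank := Matrix.rank_conjTranspose_mul_self T
    rw [hTsym, hTT] at h1; omega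
  set e := (WithLp.linearEquiv 2 ℝ (Fin n → ℝ)).symm with hedef
  set w : Fin n → EuclideanSpace ℝ (Fin n) := fun i => e (Tᵀ i) with hwdef
  have hinner : ∀ i k, (inner ℝ (w i) (w k) : ℝ) = H i k := by
    intro i k
    rw [← hTT, Matrix.mul_apply]
    simp only [hwdef, hedef, PiLp.inner_apply, RCLike.inner_apply, conj_trivial,
      WithLp.linearEquiv_symm_apply, PiLp.toLp_apply, Matrix.transpose_apply]
    exact Finset.sum_congr rfl fun l _ => by rw [hsym i l]; exact mul_comm _ _
  have hspan : Module.finrank ℝ (Submodule.span ℝ (Set.range w)) = r := by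
    have h1 : Set.range w = ⇑e '' Set.range T.col := by
      rw [hwdef, ← Set.range_comp]
      rfl
    rw [h1, ← LinearEquiv.coe_coe, ← Submodule.map_span]
    exact (LinearEquiv.finrank_map_eq e (Submodule.span ℝ (Set.range T.col))).trans
      (by rw [← Matrix.range_mulVecLin]; exact hrT)
  set W := Submodule.span ℝ (Set.range w) with hWdef
  have hWmem : ∀ i, w i ∈ W := fun i => Submodule.subset_span (Set.mem_range_self i)
  set b := (stdOrthonormalBasis ℝ W).reindex (finCongr hspan) with hbdef
  set L := b.repr with hLdef
  refine ⟨fun i => L ⟨w i, hWmem i⟩, ?_, ?_⟩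
  · have h2 : Set.range (fun i => L ⟨w i, hWmem i⟩)
        = ⇑L '' Set.range (fun i => (⟨w i, hWmem i⟩ : W)) := by
      rw [← Set.range_comp]; rfl
    have htop : Submodule.span ℝ (Set.range fun i => (⟨w i, hWmem i⟩ : W)) = ⊤ := by
      apply Submodule.map_injective_of_injective (Submodule.injective_subtype W)
      rw [Submodule.map_span, Submodule.map_top, Submodule.range_subtype]
      have : W.subtype '' Set.range (fun i => (⟨w i, hWmem i⟩ : W)) = Set.range w := by
        ext y
        simp [Submodule.subtype]
      rw [this, hWdef]
    have h3 : (⇑L '' Set.range fun i => (⟨w i, hWmem i⟩ : W))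
        = ⇑(L.toLinearEquiv.toLinearMap) '' Set.range (fun i => (⟨w i, hWmem i⟩ : W)) := rfl
    rw [h2, h3, ← Submodule.map_span, htop, Submodule.map_top]
    rw [LinearEquiv.range, finrank_top]
    simp
  · intro i k
    rw [hLdef, LinearIsometryEquiv.inner_map_map]
    exact hinner i k


set_option maxHeartbeats 1000000 in
/-- converse construction. If an `n`-vertex graph `G` satisfies the spectral
conditions of Theorem 3.1, then there is a spherical `{α,β}`-code of size `n` and rank `r`
in `ℝ^r` whose associated `α`-graph is `G`. -/
theorem stmt2 (n : ℕ)
    (α β μ : ℝ) (hβ₁ : -1 ≤ β) (hβα : β < α) (hα : α < 1) (hβ₀ : β < 0)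
    (hμ : μ = (1 - β) / (α - β))
    (G : SimpleGraph (Fin n)) [DecidableRel G.Adj]
    (M : Matrix (Fin n) (Fin n) ℝ)
    (hM : M = G.adjMatrix ℝ + μ • (1 : Matrix (Fin n) (Fin n) ℝ))
    (hpsd : M.PosSemidef)
    (hj : ∃ x : Fin n → ℝ, M *ᵥ x = fun _ => 1)
    (hle : ∀ N : Matrix (Fin n) (Fin n) ℝ, M * N * M = M →
      (fun _ => (1 : ℝ)) ⬝ᵥ (N *ᵥ fun _ => 1) ≤ (α - β) / (-β))
    (r : ℕ)
    (hr : ∀ N : Matrix (Fin n) (Fin n) ℝ, M * N * M = M →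
      (r : ℤ) = if (fun _ => (1 : ℝ)) ⬝ᵥ (N *ᵥ fun _ => 1) = (α - β) / (-β)
        then (M.rank : ℤ) - 1 else (M.rank : ℤ)) :
    ∃ u : Fin n → EuclideanSpace ℝ (Fin r),
      (∀ i, ‖u i‖ = 1) ∧
      Module.finrank ℝ (Submodule.span ℝ (Set.range u)) = r ∧
      ∀ i j, i ≠ j → rinner (u i) (u j) = if G.Adj i j then α else β := by
  classical
  obtain ⟨x, hx⟩ := hj
  set j : Fin n → ℝ := fun _ => 1 with hjdef
  have hMherm : Mᴴ = M := hpsd.1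
  have hMsym : Mᵀ = M := hpsd.1
  have hab : (0:ℝ) < α - β := sub_pos.mpr hβα
  have hnb : (0:ℝ) < -β := neg_pos.mpr hβ₀
  set cα : ℝ := (α - β) / (-β) with hcα
  have hcαpos : 0 < cα := div_pos hab hnb
  have hMv : ∀ v : Fin n → ℝ, M *ᵥ v = v ᵥ* M := by
    intro v
    have h := Matrix.mulVec_transpose M v
    rwa [hMsym] at h
  set s : ℝ := x ⬝ᵥ j with hsdef
  have hs_eq : ∀ N : Matrix (Fin n) (Fin n) ℝ, M * N * M = M → j ⬝ᵥ (N *ᵥ j) = s := by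
    intro N hN
    have h1 : j ⬝ᵥ (N *ᵥ j) = x ⬝ᵥ ((M * N * M) *ᵥ x) := by
      rw [← hx, Matrix.mulVec_mulVec, hMv x, ← dotProduct_mulVec,
        Matrix.mulVec_mulVec, ← Matrix.mul_assoc]
    rw [h1, hN, hx]
  have hs2 : s = x ⬝ᵥ (M *ᵥ x) := by rw [hx]
  obtain ⟨N₀, hN₀⟩ := exists_oneInv M hpsd.1
  have hsle : s ≤ cα := by
    have h := hle N₀ hN₀
    rwa [hs_eq N₀ hN₀] at h
  have hrr : (r : ℤ) = if s = cα then (M.rank : ℤ) - 1 else (M.rank : ℤ) := by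
    have h := hr N₀ hN₀
    rwa [hs_eq N₀ hN₀] at h
  -- quadratic form facts
  obtain ⟨S1, hS1sym, hS1M⟩ := psd_sqrt_exists M hpsd
  have hS1v : ∀ v : Fin n → ℝ, v ᵥ* S1 = S1 *ᵥ v := by
    intro v
    have h := Matrix.mulVec_transpose S1 v
    rw [show S1ᵀ = S1 from hS1sym] at h
    exact h.symm
  have hq_eq : ∀ v, v ⬝ᵥ (M *ᵥ v) = (S1 *ᵥ v) ⬝ᵥ (S1 *ᵥ v) := by
    intro v
    conv_lhs => rw [← hS1M, ← Matrix.mulVec_mulVec, dotProduct_mulVec, hS1v]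
  have hq_nonneg : ∀ v, 0 ≤ v ⬝ᵥ (M *ᵥ v) := by
    intro v
    simpa using hpsd.dotProduct_mulVec_nonneg v
  have hCS : ∀ v w, (v ⬝ᵥ (M *ᵥ w))^2 ≤ (v ⬝ᵥ (M *ᵥ v)) * (w ⬝ᵥ (M *ᵥ w)) := by
    intro v w
    have h1 : v ⬝ᵥ (M *ᵥ w) = (S1 *ᵥ v) ⬝ᵥ (S1 *ᵥ w) := by
      conv_lhs => rw [← hS1M, ← Matrix.mulVec_mulVec, dotProduct_mulVec, hS1v]
    rw [h1, hq_eq, hq_eq]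
    have h2 := Finset.sum_mul_sq_le_sq_mul_sq Finset.univ (S1 *ᵥ v) (S1 *ᵥ w)
    simpa [dotProduct, pow_two] using h2
  have hjv : ∀ v, j ⬝ᵥ v = x ⬝ᵥ (M *ᵥ v) := by
    intro v
    rw [← hx, hMv x]
    exact (dotProduct_mulVec x M v).symm
  -- the Gram matrix
  set H : Matrix (Fin n) (Fin n) ℝ := (α - β) • M + β • vecMulVec j j with hHdef
  have hJv : ∀ v, vecMulVec j j *ᵥ v = (j ⬝ᵥ v) • j := by
    intro v
    funext i
    simp [Matrix.mulVec, Matrix.vecMulVec_apply, dotProduct, hjdef]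
  have hHv : ∀ v, H *ᵥ v = (α - β) • (M *ᵥ v) + (β * (j ⬝ᵥ v)) • j := by
    intro v
    rw [hHdef, Matrix.add_mulVec, Matrix.smul_mulVec, Matrix.smul_mulVec,
      hJv, smul_smul]
  have hHq : ∀ v, v ⬝ᵥ (H *ᵥ v) = (α - β) * (v ⬝ᵥ (M *ᵥ v)) + β * (j ⬝ᵥ v)^2 := by
    intro v
    rw [hHv, dotProduct_add, dotProduct_smul, dotProduct_smul,
      dotProduct_comm v j]
    simp [smul_eq_mul]; ring
  have hHherm : H.IsHermitian := by
    have h2 : (vecMulVec j j).IsHermitian := by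
      ext i k
      simp [Matrix.conjTranspose_apply, Matrix.vecMulVec_apply, hjdef]
    show Hᴴ = H
    rw [hHdef, Matrix.conjTranspose_add, Matrix.conjTranspose_smul, Matrix.conjTranspose_smul,
      hMherm, h2]
    simp
  have hc : (-β) * cα = α - β := by
    rw [hcα, mul_comm]
    exact div_mul_cancel₀ _ hnb.ne'
  have hHpsd : H.PosSemidef := by
    refine .of_dotProduct_mulVec_nonneg hHherm fun v => ?_
    rw [star_trivial, hHq]
    set t := j ⬝ᵥ v with htdef
    set qv := v ⬝ᵥ (M *ᵥ v) with hqvdef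
    have hqv : 0 ≤ qv := hq_nonneg v
    have h1 : t^2 ≤ s * qv := by
      rw [htdef, hjv v, hs2]
      exact hCS x v
    have h3 : s * qv ≤ cα * qv := mul_le_mul_of_nonneg_right hsle hqv
    have h5 : (-β) * t^2 ≤ (-β) * (cα * qv) := mul_le_mul_of_nonneg_left (h1.trans h3) hnb.le
    nlinarith [h5, hc]
  -- kernels
  set c' : ℝ := (-β) / (α - β) with hc'def
  have hc'pos : 0 < c' := div_pos hnb hab
  have hc'c : c' * cα = 1 := by
    rw [hc'def, hcα, div_mul_div_comm, mul_comm (α - β) (-β)]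
    exact div_self (mul_pos hnb hab).ne'
  have hker1 : ∀ v, M *ᵥ v = 0 → H *ᵥ v = 0 := by
    intro v hv
    rw [hHv, hv, hjv v, hv]
    simp
  have hker2 : ∀ v, H *ᵥ v = 0 → M *ᵥ v = (c' * (j ⬝ᵥ v)) • j := by
    intro v hv
    rw [hHv] at hv
    funext i
    have h := congrFun hv i
    simp only [Pi.add_apply, Pi.smul_apply, Pi.zero_apply, smul_eq_mul, hjdef, mul_one] at h
    simp only [Pi.smul_apply, smul_eq_mul, hjdef, mul_one, hc'def]
    have : (α - β) * (M *ᵥ v) i = -(β * (j ⬝ᵥ v)) := by linarith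
    field_simp
    linarith [this]
  have hrankM : M.rank + Module.finrank ℝ (LinearMap.ker M.mulVecLin) = n := by
    have h := LinearMap.finrank_range_add_finrank_ker M.mulVecLin
    rwa [Module.finrank_pi, Fintype.card_fin] at h
  have hrankH : H.rank + Module.finrank ℝ (LinearMap.ker H.mulVecLin) = n := by
    have h := LinearMap.finrank_range_add_finrank_ker H.mulVecLin
    rwa [Module.finrank_pi, Fintype.card_fin] at h
  have hrH : H.rank = r := by
    by_cases hcase : s = cα
    · -- ker H = ker M ⊔ span x
      have hxnk : M *ᵥ x ≠ 0 := by
        rw [hx]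
        intro h
        have : s = 0 := by rw [hsdef, show j = 0 from h]; simp
        exact absurd (hcase ▸ this).symm hcαpos.ne
      have hxne : x ≠ 0 := fun h => hxnk (by rw [h, Matrix.mulVec_zero])
      have hxker : x ∉ LinearMap.ker M.mulVecLin := by
        simpa [LinearMap.mem_ker, Matrix.mulVecLin_apply] using hxnk
      have hkereq : LinearMap.ker H.mulVecLin
          = LinearMap.ker M.mulVecLin ⊔ (ℝ ∙ x) := by
        apply le_antisymm
        · intro v hv
          rw [LinearMap.mem_ker, Matrix.mulVecLin_apply] at hv
          have h2 := hker2 v hv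
          have hvsplit : v = (v - (c' * (j ⬝ᵥ v)) • x) + (c' * (j ⬝ᵥ v)) • x := by abel
          rw [hvsplit]
          apply Submodule.add_mem_sup
          · rw [LinearMap.mem_ker, Matrix.mulVecLin_apply, Matrix.mulVec_sub,
              Matrix.mulVec_smul, hx, h2]
            simp
          · exact Submodule.smul_mem _ _ (Submodule.mem_span_singleton_self x)
        · apply sup_le
          · intro v hv
            rw [LinearMap.mem_ker, Matrix.mulVecLin_apply] at hv ⊢
            exact hker1 v hv
          · rw [Submodule.span_singleton_le_iff_mem, LinearMap.mem_ker,
              Matrix.mulVecLin_apply]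
            rw [hHv, hx, show j ⬝ᵥ x = s from dotProduct_comm j x, hcase]
            have hβcα : β * cα = -(α - β) := by linarith [hc]
            rw [hβcα, ← add_smul]
            simp
      have hdisj : Disjoint (LinearMap.ker M.mulVecLin) (ℝ ∙ x) :=
        (Submodule.disjoint_span_singleton' hxne).mpr hxker
      have hfin : Module.finrank ℝ (LinearMap.ker H.mulVecLin)
          = Module.finrank ℝ (LinearMap.ker M.mulVecLin) + 1 := by
        rw [hkereq]
        have h := Submodule.finrank_sup_add_finrank_inf_eq
          (LinearMap.ker M.mulVecLin) (ℝ ∙ x)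
        rw [hdisj.eq_bot, finrank_bot, add_zero, finrank_span_singleton hxne] at h
        exact h
      rw [if_pos hcase] at hrr
      omega
    · have hkereq : LinearMap.ker H.mulVecLin = LinearMap.ker M.mulVecLin := by
        ext v
        rw [LinearMap.mem_ker, LinearMap.mem_ker, Matrix.mulVecLin_apply,
          Matrix.mulVecLin_apply]
        constructor
        · intro hv
          have h2 := hker2 v hv
          have ht : j ⬝ᵥ v = 0 := by
            by_contra hne
            apply hcase
            have h3 : j ⬝ᵥ v = (c' * (j ⬝ᵥ v)) * s := by
              conv_lhs => rw [hjv v, h2]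
              rw [dotProduct_smul, smul_eq_mul, hsdef]
            have h5 : (c' * s - 1) * (j ⬝ᵥ v) = 0 := by linear_combination -h3
            have h4 : c' * s = 1 := by
              rcases mul_eq_zero.mp h5 with h | h
              · linarith
              · exact absurd h hne
            have h6 : c' * s = c' * cα := by rw [h4, hc'c]
            exact mul_left_cancel₀ hc'pos.ne' h6
          rw [h2, ht]
          simp
        · exact hker1 v
      rw [if_neg hcase] at hrr
      rw [hkereq] at hrankH
      omega
  obtain ⟨u, hspan, hinner⟩ := gram_to_code H hHpsd hrH
  have habμ : (α - β) * μ = 1 - β := by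
    rw [hμ, mul_comm]
    exact div_mul_cancel₀ _ hab.ne'
  have hHdiag : ∀ i, H i i = 1 := by
    intro i
    rw [hHdef, hM]
    simp only [Matrix.add_apply, Matrix.smul_apply, Matrix.vecMulVec_apply, hjdef,
      SimpleGraph.adjMatrix_apply, Matrix.one_apply_eq, smul_eq_mul, mul_one]
    rw [if_neg (G.irrefl (v := i))]
    nlinarith [habμ]
  have hHoff : ∀ i k, i ≠ k → H i k = if G.Adj i k then α else β := by
    intro i k hik
    rw [hHdef, hM]
    simp only [Matrix.add_apply, Matrix.smul_apply, Matrix.vecMulVec_apply, hjdef,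
      SimpleGraph.adjMatrix_apply, Matrix.one_apply_ne hik, smul_eq_mul, mul_one]
    split_ifs <;> ring
  refine ⟨u, ?_, hspan, ?_⟩
  · intro i
    have h := hinner i i
    rw [hHdiag i, real_inner_self_eq_norm_mul_norm] at h
    nlinarith [norm_nonneg (u i), h]
  · intro i k hik
    show (inner ℝ (u i) (u k) : ℝ) = _
    rw [hinner i k, hHoff i k hik]
end
end

section
/- Let -1 ≤ β < α < 1 with β < 0, and set μ = (1-β)/(α-β). Let G be the associated α-graph of a spherical {α,β}-code, with adjacency matrix A_G. Then for any induced subgraph H of G on t vertices and any {1}-inverse N of A_G + μI, one has t² ≤ (2|E(H)| + tμ)·(jᵀNj) ≤ ((α-β)/(-β))·(2|E(H)| + tμ), where |E(H)| is the number of edges of H. -/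
open Matrix

noncomputable section

open scoped Classical

lemma dp_mulVec_symm {n : ℕ} {B : Matrix (Fin n) (Fin n) ℝ} (hsym : Bᵀ = B)
    (x y : Fin n → ℝ) : x ⬝ᵥ B *ᵥ y = y ⬝ᵥ B *ᵥ x := by
  rw [dotProduct_mulVec, ← mulVec_transpose, hsym, dotProduct_comm]

lemma psd_cauchy {n : ℕ} {B : Matrix (Fin n) (Fin n) ℝ} (hsym : Bᵀ = B)
    (hpsd : ∀ x, 0 ≤ x ⬝ᵥ B *ᵥ x) (x y : Fin n → ℝ) :
    (x ⬝ᵥ B *ᵥ y) ^ 2 ≤ (x ⬝ᵥ B *ᵥ x) * (y ⬝ᵥ B *ᵥ y) := by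
  have key : ∀ t : ℝ, 0 ≤ (y ⬝ᵥ B *ᵥ y) * (t * t) + (2 * (x ⬝ᵥ B *ᵥ y)) * t
      + (x ⬝ᵥ B *ᵥ x) := by
    intro t
    have h := hpsd (x + t • y)
    have hexp : (x + t • y) ⬝ᵥ B *ᵥ (x + t • y)
        = (y ⬝ᵥ B *ᵥ y) * (t * t) + (2 * (x ⬝ᵥ B *ᵥ y)) * t + (x ⬝ᵥ B *ᵥ x) := by
      rw [mulVec_add, dotProduct_add, add_dotProduct, add_dotProduct,
        mulVec_smul, dotProduct_smul, smul_dotProduct, smul_dotProduct,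
        dotProduct_smul, dp_mulVec_symm hsym y x]
      simp [smul_eq_mul]; ring
    linarith [hexp ▸ h]
  have hd := discrim_le_zero key
  rw [discrim] at hd
  nlinarith [hd]

lemma symm_mem_range {n : ℕ} {B : Matrix (Fin n) (Fin n) ℝ} (hsym : Bᵀ = B)
    (v : Fin n → ℝ) (hv : ∀ x, B *ᵥ x = 0 → v ⬝ᵥ x = 0) : ∃ w, B *ᵥ w = v := by
  let T : EuclideanSpace ℝ (Fin n) →ₗ[ℝ] EuclideanSpace ℝ (Fin n) :=
    { toFun := fun x => WithLp.toLp 2 (B *ᵥ x)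
      map_add' := fun a b => by simp [Matrix.mulVec_add]
      map_smul' := fun c a => by simp [Matrix.mulVec_smul] }
  have hinner : ∀ a b : EuclideanSpace ℝ (Fin n), (inner ℝ a b : ℝ) = a ⬝ᵥ b := by
    intro a b
    rw [PiLp.inner_apply]
    simp [dotProduct, RCLike.inner_apply, mul_comm]
  have hrange : LinearMap.range T = (LinearMap.ker T)ᗮ := by
    have hle : LinearMap.range T ≤ (LinearMap.ker T)ᗮ := by
      rintro _ ⟨a, rfl⟩
      rw [Submodule.mem_orthogonal]
      intro z hz
      have hz' : B *ᵥ z = 0 := by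
        have := congrArg WithLp.ofLp (LinearMap.mem_ker.mp hz); simpa [T] using this
      rw [hinner]
      show z ⬝ᵥ B *ᵥ a = 0
      rw [dp_mulVec_symm hsym z a, hz']
      simp
    apply Submodule.eq_of_le_of_finrank_le hle
    have h1 := LinearMap.finrank_range_add_finrank_ker T
    have h2 := Submodule.finrank_add_finrank_orthogonal (K := LinearMap.ker T)
    have hE : Module.finrank ℝ (EuclideanSpace ℝ (Fin n)) = n := by
      rw [finrank_euclideanSpace]; simp
    omega
  have hvmem : (WithLp.toLp 2 v : EuclideanSpace ℝ (Fin n)) ∈ (LinearMap.ker T)ᗮ := by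
    rw [Submodule.mem_orthogonal]
    intro z hz
    have hz' : B *ᵥ z = 0 := by
      have := congrArg WithLp.ofLp (LinearMap.mem_ker.mp hz); simpa [T] using this
    rw [hinner]
    show z ⬝ᵥ v = 0
    rw [dotProduct_comm]; exact hv z hz'
  rw [← hrange] at hvmem
  obtain ⟨w, hw⟩ := hvmem
  exact ⟨w, by have := congrArg WithLp.ofLp hw; simpa [T] using this⟩

def gram {d n : ℕ} (u : Fin n → EuclideanSpace ℝ (Fin d)) : Matrix (Fin n) (Fin n) ℝ :=
  Matrix.of fun i j => rinner (u i) (u j)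

lemma gram_eq {d n : ℕ} (α β μ : ℝ) (hβα : β < α) (hμ : μ = (1 - β) / (α - β))
    (u : Fin n → EuclideanSpace ℝ (Fin d)) (hu : IsSphericalCode α β u) :
    gram u = (α - β) • (alphaAdj α u + μ • (1 : Matrix (Fin n) (Fin n) ℝ))
      + β • Matrix.of (fun _ _ => (1 : ℝ)) := by
  have hab : α - β ≠ 0 := by linarith
  ext i j
  by_cases hij : i = j
  · subst hij
    have h1 : rinner (u i) (u i) = 1 := by
      rw [rinner, real_inner_self_eq_norm_mul_norm, hu.1 i]; norm_num
    simp [_root_.gram, alphaAdj, Matrix.one_apply, h1, hμ]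
    field_simp
    ring
  · rcases hu.2 i j hij with h | h
    · simp [_root_.gram, alphaAdj, Matrix.one_apply, hij, h]
    · by_cases ha : rinner (u i) (u j) = α
      · simp [_root_.gram, alphaAdj, Matrix.one_apply, hij, ha]
      · simp [_root_.gram, alphaAdj, Matrix.one_apply, hij, ha, h]
        intro h''
        rw [h'']; ring

lemma gram_psd {d n : ℕ} (u : Fin n → EuclideanSpace ℝ (Fin d)) (x : Fin n → ℝ) :
    0 ≤ x ⬝ᵥ (gram u) *ᵥ x := by
  have hx : x ⬝ᵥ (gram u) *ᵥ x = (inner ℝ (∑ i, x i • u i) (∑ j, x j • u j) : ℝ) := by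
    rw [inner_sum]
    simp only [dotProduct, mulVec, dotProduct, _root_.gram, Matrix.of_apply, Finset.mul_sum]
    rw [Finset.sum_comm]
    refine Finset.sum_congr rfl fun j _ => ?_
    rw [sum_inner]
    refine Finset.sum_congr rfl fun i _ => ?_
    rw [real_inner_smul_left, real_inner_smul_right]
    simp only [rinner]
    ring
  rw [hx]
  exact real_inner_self_nonneg

lemma edge_count {d n : ℕ} (α : ℝ) (u : Fin n → EuclideanSpace ℝ (Fin d))
    (s : Finset (Fin n)) :
    ∑ i ∈ s, ∑ j ∈ s, (alphaAdj α u) i j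
      = 2 * (((alphaGraph α u).induce (↑s : Set (Fin n))).edgeFinset.card : ℝ) := by
  classical
  set G := alphaGraph α u with hG
  set H := G.induce (↑s : Set (Fin n)) with hH
  have hA : ∀ i j, (alphaAdj α u) i j = if G.Adj i j then (1:ℝ) else 0 := by
    intro i j
    simp only [alphaAdj, Matrix.of_apply, hG, alphaGraph]
  calc ∑ i ∈ s, ∑ j ∈ s, (alphaAdj α u) i j
      = ∑ a : ↥s, ∑ b : ↥s, (alphaAdj α u) a b := by
        rw [← Finset.sum_coe_sort s (fun i => ∑ j ∈ s, (alphaAdj α u) i j)]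
        exact Finset.sum_congr rfl fun a _ =>
          (Finset.sum_coe_sort s (fun j => (alphaAdj α u) a j)).symm
    _ = ∑ a : ↥s, (H.degree ⟨a.1, a.2⟩ : ℝ) := by
        refine Finset.sum_congr rfl fun a _ => ?_
        rw [SimpleGraph.degree, SimpleGraph.neighborFinset_eq_filter]
        rw [Finset.card_filter]
        push_cast
        refine Finset.sum_congr rfl fun b _ => ?_
        rw [hA]
        by_cases hadj : G.Adj a.1 b.1
        · rw [if_pos hadj]
          exact (if_pos (show H.Adj ⟨a.1, a.2⟩ b from hadj)).symm
        · rw [if_neg hadj]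
          exact (if_neg (show ¬ H.Adj ⟨a.1, a.2⟩ b from hadj)).symm
    _ = 2 * (H.edgeFinset.card : ℝ) := by
        have := SimpleGraph.sum_degrees_eq_twice_card_edges H
        have hcast : ∑ a : ↥(↑s : Set (Fin n)), (H.degree a : ℝ)
            = ((∑ v, H.degree v : ℕ) : ℝ) := by push_cast; rfl
        rw [show (∑ a : ↥s, (H.degree ⟨a.1, a.2⟩ : ℝ))
            = ∑ a : ↥(↑s : Set (Fin n)), (H.degree a : ℝ) from rfl, hcast, this]
        push_cast; ring

/-- for the `α`-graph `G` of a spherical `{α,β}`-code and any induced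
subgraph `H` on `t` vertices, `t² ≤ (2|E(H)| + tμ)·jᵀNj ≤ ((α-β)/(-β))·(2|E(H)| + tμ)`
for any `{1}`-inverse `N` of `A_G + μI`. -/
theorem stmt3 (d n : ℕ)
    (α β μ : ℝ) (hβ₁ : -1 ≤ β) (hβα : β < α) (hα : α < 1) (hβ₀ : β < 0)
    (hμ : μ = (1 - β) / (α - β))
    (u : Fin n → EuclideanSpace ℝ (Fin d)) (hu : IsSphericalCode α β u)
    (s : Finset (Fin n)) (t : ℕ) (ht : t = s.card)
    (e : ℕ) (he : e = ((alphaGraph α u).induce (↑s : Set (Fin n))).edgeFinset.card)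
    (N : Matrix (Fin n) (Fin n) ℝ)
    (hN : (alphaAdj α u + μ • (1 : Matrix (Fin n) (Fin n) ℝ)) * N *
        (alphaAdj α u + μ • 1) = alphaAdj α u + μ • 1) :
    (t : ℝ) ^ 2 ≤ (2 * e + t * μ) * ((fun _ => (1 : ℝ)) ⬝ᵥ (N *ᵥ fun _ => 1)) ∧
    (2 * e + t * μ) * ((fun _ => (1 : ℝ)) ⬝ᵥ (N *ᵥ fun _ => 1)) ≤
      (α - β) / (-β) * (2 * e + t * μ) := by
  have hab : (0:ℝ) < α - β := by linarith
  have hβ' : (0:ℝ) < -β := by linarith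
  have hμ0 : 0 < μ := by
    rw [hμ]; exact div_pos (by linarith) hab
  set B := alphaAdj α u + μ • (1 : Matrix (Fin n) (Fin n) ℝ) with hB
  have hAsym : (alphaAdj α u)ᵀ = alphaAdj α u := by
    ext i j
    simp only [alphaAdj, Matrix.transpose_apply, Matrix.of_apply]
    rw [rinner_comm (u j) (u i)]
    by_cases h : i ≠ j ∧ rinner (u i) (u j) = α
    · rw [if_pos ⟨h.1.symm, h.2⟩, if_pos h]
    · rw [if_neg (fun h' => h ⟨h'.1.symm, h'.2⟩), if_neg h]
  have hsym : Bᵀ = B := by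
    rw [hB, Matrix.transpose_add, hAsym, Matrix.transpose_smul, Matrix.transpose_one]
  set j1 : Fin n → ℝ := fun _ => (1:ℝ) with hj1
  have hq : ∀ x : Fin n → ℝ, (α - β) * (x ⬝ᵥ B *ᵥ x)
      = x ⬝ᵥ (gram u) *ᵥ x + (-β) * (∑ i, x i)^2 := by
    intro x
    have hge := gram_eq α β μ hβα hμ u hu
    have h2 : x ⬝ᵥ (gram u) *ᵥ x
        = (α - β) * (x ⬝ᵥ B *ᵥ x) + β * (x ⬝ᵥ (Matrix.of fun _ _ => (1:ℝ)) *ᵥ x) := by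
      rw [hge, Matrix.add_mulVec, dotProduct_add, smul_mulVec, smul_mulVec,
        dotProduct_smul, dotProduct_smul]
      simp [smul_eq_mul, hB]
    have h3 : x ⬝ᵥ (Matrix.of fun _ _ => (1:ℝ)) *ᵥ x = (∑ i, x i)^2 := by
      simp only [dotProduct, mulVec, dotProduct, Matrix.of_apply, one_mul]
      rw [← Finset.sum_mul, sq]
    rw [h2, h3]; ring
  have hpsd : ∀ x, 0 ≤ x ⬝ᵥ B *ᵥ x := by
    intro x
    have h1 := hq x
    have h2 := gram_psd u x
    nlinarith [sq_nonneg (∑ i, x i)]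
  obtain ⟨w, hw⟩ : ∃ w, B *ᵥ w = j1 := by
    apply symm_mem_range hsym
    intro x hx
    have h0 : (α - β) * (x ⬝ᵥ B *ᵥ x) = 0 := by rw [hx]; simp
    have h1 := hq x
    have h2 := gram_psd u x
    have hz : (-β) * (∑ i, x i)^2 = 0 := by
      have := mul_nonneg hβ'.le (sq_nonneg (∑ i, x i))
      linarith
    have hsq : (∑ i, x i)^2 = 0 := by
      rcases mul_eq_zero.mp hz with h | h
      · linarith
      · exact h
    have hsum : (∑ i, x i) = 0 := by
      exact pow_eq_zero_iff (two_ne_zero) |>.mp hsq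
    simpa [hj1, dotProduct] using hsum
  have hkey : B *ᵥ (N *ᵥ (B *ᵥ w)) = B *ᵥ w := by
    rw [mulVec_mulVec, mulVec_mulVec, hN]
  set c := j1 ⬝ᵥ N *ᵥ j1 with hc
  have hcw : c = w ⬝ᵥ B *ᵥ w := by
    rw [hc, ← hw, dotProduct_comm, dp_mulVec_symm hsym, hkey]
  set χ : Fin n → ℝ := fun i => if i ∈ s then (1:ℝ) else 0 with hχ
  have hdp : ∀ f : Fin n → ℝ, f ⬝ᵥ χ = ∑ i ∈ s, f i := by
    intro f
    simp only [dotProduct, hχ, mul_ite, mul_one, mul_zero]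
    rw [Finset.sum_ite_mem, Finset.univ_inter]
  have hjχ : j1 ⬝ᵥ χ = t := by
    rw [hdp]
    simp [hj1, ht]
  have hwBχ : w ⬝ᵥ B *ᵥ χ = t := by
    rw [dp_mulVec_symm hsym w χ, hw, dotProduct_comm, hjχ]
  have hqχ : χ ⬝ᵥ B *ᵥ χ = 2 * e + t * μ := by
    rw [hB, Matrix.add_mulVec, dotProduct_add, smul_mulVec, one_mulVec, dotProduct_smul]
    have h1 : χ ⬝ᵥ (alphaAdj α u *ᵥ χ) = ∑ i ∈ s, ∑ j ∈ s, alphaAdj α u i j := by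
      rw [dotProduct_comm, hdp]
      refine Finset.sum_congr rfl fun i _ => ?_
      show (fun j => alphaAdj α u i j) ⬝ᵥ χ = _
      rw [hdp]
    have h2 : χ ⬝ᵥ χ = (t:ℝ) := by
      rw [hdp]
      simp [hχ, ht]
    rw [h1, h2, edge_count α u s, smul_eq_mul, ← he]
    ring
  have hc0 : 0 ≤ c := by rw [hcw]; exact hpsd w
  have hcs := psd_cauchy hsym hpsd w χ
  rw [hwBχ, hqχ, ← hcw] at hcs
  have hnn : (0:ℝ) ≤ 2 * e + t * μ := by positivity
  constructor
  · calc (t:ℝ)^2 ≤ c * (2 * e + t * μ) := hcs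
      _ = (2 * e + t * μ) * c := by ring
  · have hjw : j1 ⬝ᵥ w = c := by
      rw [← hw, dotProduct_comm, hcw]
    have hsw : (∑ i, w i) = c := by
      rw [← hjw]; simp [hj1, dotProduct]
    have hqw := hq w
    rw [← hcw, hsw] at hqw
    have hgw := gram_psd u w
    have hineq : (-β) * c * c ≤ (α - β) * c := by nlinarith
    have hcle : c ≤ (α - β) / (-β) := by
      rcases hc0.eq_or_lt with h0 | hpos
      · rw [← h0]; positivity
      · rw [le_div_iff₀ hβ']
        have := (mul_le_mul_iff_of_pos_right hpos).mp (by linarith : ((-β) * c) * c ≤ (α - β) * c)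
        linarith
    calc (2 * e + t * μ) * c ≤ (2 * e + t * μ) * ((α - β) / (-β)) :=
          mul_le_mul_of_nonneg_left hcle hnn
      _ = (α - β) / (-β) * (2 * e + t * μ) := by ring
end
end

section
/- Let -1 ≤ β < α < 1 with β < 0. Let G be the associated α-graph of a spherical {α,β}-code of rank r. If G is not the complete graph K_{r+1}, then G contains no complete subgraph on r+1 vertices (G is K_{r+1}-free). -/
open Matrix

noncomputable section

/-- if `G` is the `α`-graph of a spherical `{α,β}`-code of rank `r` and `G`
is not (isomorphic to) the complete graph `K_{r+1}`, then `G` is `K_{r+1}`-free. -/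
theorem stmt5 (d n : ℕ)
    (α β : ℝ) (hβ₁ : -1 ≤ β) (hβα : β < α) (hα : α < 1) (hβ₀ : β < 0)
    (u : Fin n → EuclideanSpace ℝ (Fin d)) (hu : IsSphericalCode α β u)
    (r : ℕ) (hr : r = Module.finrank ℝ (Submodule.span ℝ (Set.range u)))
    (hG : ¬ Nonempty ((alphaGraph α u) ≃g (⊤ : SimpleGraph (Fin (r + 1))))) :
    (alphaGraph α u).CliqueFree (r + 1) := by

  intro s hs
  obtain ⟨hclique, hcard⟩ := hs
  set W := Submodule.span ℝ (Set.range u) with hW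
  have hmem : ∀ i, u i ∈ W := fun i => Submodule.subset_span ⟨i, rfl⟩
  have huu : ∀ i, rinner (u i) (u i) = 1 := by
    intro i
    rw [rinner, real_inner_self_eq_norm_sq, hu.1 i]
    norm_num
  have hAdj : ∀ i ∈ s, ∀ j ∈ s, i ≠ j → rinner (u i) (u j) = α := by
    intro i hi j hj hij
    exact (hclique hi hj hij).2
  haveI : Nonempty ↥(s : Finset (Fin n)) := by
    have : s.Nonempty := Finset.card_pos.mp (by omega)
    exact ⟨⟨this.choose, this.choose_spec⟩⟩
  have hdep : ¬ LinearIndependent ℝ (fun i : ↥s => (⟨u i, hmem i⟩ : W)) := by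
    intro hli
    have hle := hli.fintype_card_le_finrank
    rw [Fintype.card_coe, hcard, ← hr] at hle
    omega
  obtain ⟨g, hg0, i₀, hi₀⟩ := Fintype.not_linearIndependent_iff.mp hdep
  have hsum0 : ∑ i : ↥s, g i • u (i : Fin n) = 0 := by
    have h := congrArg (Subtype.val) hg0
    push_cast at h
    simpa using h
  set T := ∑ i : ↥s, g i with hT
  have key : ∀ j : ↥s, g j * (1 - α) + α * T = 0 := by
    intro j
    have h0 : rinner (u (j : Fin n)) (∑ i : ↥s, g i • u (i : Fin n)) = 0 := by
      rw [hsum0]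
      simp [rinner]
    rw [rinner, inner_sum] at h0
    have hterm : ∀ i : ↥s,
        (inner ℝ (u (j : Fin n)) (g i • u (i : Fin n)) : ℝ)
          = α * g i + (if i = j then (1 - α) * g i else 0) := by
      intro i
      rw [real_inner_smul_right]
      by_cases h : i = j
      · subst h
        rw [show (inner ℝ (u (i : Fin n)) (u (i : Fin n)) : ℝ) = 1 from huu (i : Fin n)]
        simp; ring
      · have hne : (j : Fin n) ≠ (i : Fin n) := fun hc => h (Subtype.coe_injective hc.symm)
        rw [show (inner ℝ (u (j : Fin n)) (u (i : Fin n)) : ℝ) = α from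
          hAdj _ j.2 _ i.2 hne]
        simp [h]; ring
    rw [Finset.sum_congr rfl (fun i _ => hterm i)] at h0
    rw [Finset.sum_add_distrib, ← Finset.mul_sum] at h0
    rw [Finset.sum_ite_eq' Finset.univ j (fun i => (1 - α) * g i)] at h0
    simp only [Finset.mem_univ, if_true] at h0
    linarith [h0]
  have heq : ∀ i : ↥s, g i = g i₀ := by
    intro i
    have h1 := key i
    have h2 := key i₀
    have h1α : (1 : ℝ) - α > 0 := by linarith
    nlinarith [h1, h2]
  have hSigma : ∑ i : ↥s, u (i : Fin n) = 0 := by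
    have h1 : ∑ i : ↥s, g i • u (i : Fin n) = g i₀ • ∑ i : ↥s, u (i : Fin n) := by
      rw [Finset.smul_sum]
      exact Finset.sum_congr rfl fun i _ => by rw [heq i]
    rw [h1] at hsum0
    exact (smul_eq_zero.mp hsum0).resolve_left hi₀
  have hinner0 : ∀ k : Fin n, ∑ i : ↥s, rinner (u k) (u (i : Fin n)) = 0 := by
    intro k
    have h0 : rinner (u k) (∑ i : ↥s, u (i : Fin n)) = 0 := by
      rw [hSigma]; simp [rinner]
    rw [rinner, inner_sum] at h0
    simpa [rinner] using h0
  -- from a clique vertex: 1 + α * r = 0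
  have hcards : Fintype.card ↥(s : Finset (Fin n)) = r + 1 := by
    rw [Fintype.card_coe, hcard]
  have hαr : 1 + α * r = 0 := by
    have h0 := hinner0 (i₀ : Fin n)
    have hterm : ∀ i : ↥s,
        rinner (u (i₀ : Fin n)) (u (i : Fin n))
          = α + (if i = i₀ then (1 - α) else 0) := by
      intro i
      by_cases h : i = i₀
      · subst h; rw [huu]; simp
      · have hne : (i₀ : Fin n) ≠ (i : Fin n) := fun hc => h (Subtype.coe_injective hc.symm)
        rw [hAdj _ i₀.2 _ i.2 hne]
        simp [h]
    rw [Finset.sum_congr rfl (fun i _ => hterm i)] at h0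
    rw [Finset.sum_add_distrib, Finset.sum_const, Finset.card_univ, hcards] at h0
    rw [Finset.sum_ite_eq' Finset.univ i₀ (fun _ => (1 - α))] at h0
    simp only [Finset.mem_univ, if_true, nsmul_eq_mul] at h0
    push_cast at h0 ⊢
    linarith
  have hα0 : α < 0 := by
    rcases lt_or_ge α 0 with h | h
    · exact h
    · exfalso
      have : (0:ℝ) ≤ α * r := mul_nonneg h (Nat.cast_nonneg r)
      linarith
  have hall : ∀ k : Fin n, k ∈ s := by
    intro k
    by_contra hk
    have hneg : ∀ i : ↥s, rinner (u k) (u (i : Fin n)) < 0 := by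
      intro i
      have hne : k ≠ (i : Fin n) := fun h => hk (h ▸ i.2)
      rcases hu.2 k i hne with h | h <;> rw [h] <;> linarith
    have hlt : ∑ i : ↥s, rinner (u k) (u (i : Fin n)) < 0 := by
      have := Finset.sum_lt_sum_of_nonempty (Finset.univ_nonempty)
        (fun i _ => hneg i)
      simpa using this
    rw [hinner0 k] at hlt
    exact lt_irrefl _ hlt
  have hs_univ : s = Finset.univ := Finset.eq_univ_iff_forall.mpr hall
  have hn : n = r + 1 := by
    have h := hcard
    rw [hs_univ, Finset.card_univ, Fintype.card_fin] at h
    exact h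
  refine hG ⟨{ toEquiv := finCongr hn, map_rel_iff' := ?_ }⟩
  intro a b
  simp only [finCongr_apply, SimpleGraph.top_adj, ne_eq]
  have hcast : Fin.cast hn a = Fin.cast hn b ↔ a = b :=
    (finCongr hn).injective.eq_iff
  rw [hcast]
  constructor
  · intro hab
    exact hclique (by rw [hs_univ]; exact Finset.mem_univ a)
      (by rw [hs_univ]; exact Finset.mem_univ b) hab
  · intro hab
    exact hab.1
end
end

section
/- Let -1 ≤ β < α < 1 with β < 0, and set μ = (1-β)/(α-β). Let G be the associated α-graph of a spherical {α,β}-code, with adjacency matrix A_G. For any vertex u of G, let G_u be the subgraph of G induced by the open neighborhood N_G(u) of u. Then the all-ones vector j lies in the column space of A_{G_u} + μI, for every {1}-inverse N of A_{G_u} + μI one has jᵀNj ≤ (α-β)/(α²-β), and rank(A_{G_u} + μI) ≤ rank(A_G + μI) - 1. -/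
open Matrix

noncomputable section

open scoped Classical

lemma key_range {ι : Type*} [Fintype ι] [DecidableEq ι] (M : Matrix ι ι ℝ)
    (hsym : Mᵀ = M) (b : ι → ℝ) (hker : ∀ y, M *ᵥ y = 0 → b ⬝ᵥ y = 0) :
    ∃ x, M *ᵥ x = b := by
  let f : EuclideanSpace ℝ ι →ₗ[ℝ] EuclideanSpace ℝ ι := Matrix.toEuclideanLin M
  have hf : ∀ x : EuclideanSpace ℝ ι, (f x).ofLp = M *ᵥ x.ofLp := fun x => rfl
  have hfd : ∀ (x y : EuclideanSpace ℝ ι), (inner ℝ x y : ℝ) = x.ofLp ⬝ᵥ y.ofLp := by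
    intro x y; simp [PiLp.inner_apply, dotProduct, mul_comm]
  have htr : ∀ (z x : ι → ℝ), z ⬝ᵥ (M *ᵥ x) = (M *ᵥ z) ⬝ᵥ x := by
    intro z x
    rw [dotProduct_mulVec, ← mulVec_transpose, hsym]
  obtain ⟨p, hp, q, hq, hj⟩ :=
    Submodule.exists_add_mem_mem_orthogonal (K := LinearMap.range f) (WithLp.toLp 2 b)
  have hMq : M *ᵥ q.ofLp = 0 := by
    have h0 : (inner ℝ (f (WithLp.toLp 2 (M *ᵥ q.ofLp))) q : ℝ) = 0 := by
      exact (Submodule.mem_orthogonal _ _).1 hq _ ⟨_, rfl⟩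
    rw [hfd, hf] at h0
    have h1 : (M *ᵥ (M *ᵥ q.ofLp)) ⬝ᵥ q.ofLp = (M *ᵥ q.ofLp) ⬝ᵥ (M *ᵥ q.ofLp) := by
      rw [dotProduct_comm, htr]
    have h2 : (M *ᵥ q.ofLp) ⬝ᵥ (M *ᵥ q.ofLp) = 0 := by
      rw [← h1]; exact h0
    exact dotProduct_self_eq_zero.mp h2
  have hbq : b ⬝ᵥ q.ofLp = 0 := hker _ hMq
  have hpq : p.ofLp ⬝ᵥ q.ofLp = 0 := by
    rw [← hfd]; exact (Submodule.mem_orthogonal _ _).1 hq _ hp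
  have hb : b = p.ofLp + q.ofLp := by
    have := congrArg WithLp.ofLp hj; simpa using this
  have hq0 : q.ofLp = 0 := by
    have h3 : q.ofLp ⬝ᵥ q.ofLp = 0 := by
      have h4 := congrArg (fun z : ι → ℝ => z ⬝ᵥ q.ofLp) hb
      simp only [add_dotProduct] at h4
      rw [hbq, hpq] at h4
      linarith
    exact dotProduct_self_eq_zero.mp h3
  obtain ⟨x, hx⟩ := hp
  refine ⟨x.ofLp, ?_⟩
  rw [hb, hq0, add_zero, ← hx]; exact (hf x).symm

/-- for the `α`-graph `G` of a spherical `{α,β}`-code and any vertex `v`,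
the subgraph `G_v` induced by the open neighborhood of `v` satisfies: `j` lies in the
column space of `A_{G_v} + μI`, `jᵀNj ≤ (α-β)/(α²-β)` for any `{1}`-inverse `N`, and
`rank(A_{G_v} + μI) ≤ rank(A_G + μI) - 1`. -/
theorem stmt6 (d n : ℕ)
    (α β μ : ℝ) (hβ₁ : -1 ≤ β) (hβα : β < α) (hα : α < 1) (hβ₀ : β < 0)
    (hμ : μ = (1 - β) / (α - β))
    (u : Fin n → EuclideanSpace ℝ (Fin d)) (hu : IsSphericalCode α β u)
    (v : Fin n)
    (M : Matrix ↥((alphaGraph α u).neighborSet v) ↥((alphaGraph α u).neighborSet v) ℝ)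
    (hM : M = (alphaAdj α u).submatrix Subtype.val Subtype.val + μ • 1) :
    (∃ x, M *ᵥ x = fun _ => 1) ∧
    (∀ N, M * N * M = M →
      (fun _ => (1 : ℝ)) ⬝ᵥ (N *ᵥ fun _ => 1) ≤ (α - β) / (α ^ 2 - β)) ∧
    (M.rank : ℤ) ≤ ((alphaAdj α u + μ • (1 : Matrix (Fin n) (Fin n) ℝ)).rank : ℤ) - 1 := by
  obtain ⟨hnorm, hab⟩ := hu
  have hαβ : (0:ℝ) < α - β := sub_pos.2 hβα
  have hα2β : (0:ℝ) < α ^ 2 - β := by nlinarith [sq_nonneg α]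
  have hadj : ∀ i : ↥((alphaGraph α u).neighborSet v),
      v ≠ (i : Fin n) ∧ rinner (u v) (u i) = α := fun i => ((alphaGraph α u).mem_neighborSet v i).1 i.2
  have hself : ∀ k : Fin n, rinner (u k) (u k) = 1 := by
    intro k
    have h : rinner (u k) (u k) = ‖u k‖ ^ 2 := real_inner_self_eq_norm_sq (u k)
    rw [h, hnorm k, one_pow]
  -- entrywise Gram identity
  have hfact : ∀ i k : ↥((alphaGraph α u).neighborSet v),
      (α - β) * M i k = rinner (u i) (u k) - β := by
    intro i k
    rw [hM]
    simp only [Matrix.add_apply, Matrix.submatrix_apply, Matrix.smul_apply, Matrix.one_apply,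
      alphaAdj, Matrix.of_apply, smul_eq_mul]
    by_cases h : i = k
    · subst h
      simp only [ne_eq, not_true_eq_false, false_and, if_false, if_pos rfl, if_true, hself]
      rw [hμ, zero_add, mul_one, mul_div_assoc', mul_comm, mul_div_assoc, div_self hαβ.ne', mul_one]
    · have hne : (i : Fin n) ≠ (k : Fin n) := Subtype.coe_injective.ne h
      rcases hab i k hne with hik | hik
      · rw [if_pos ⟨hne, hik⟩, if_neg h, hik]; ring
      · have hcond : ¬((i : Fin n) ≠ (k : Fin n) ∧ rinner (u i) (u k) = α) := by
          rintro ⟨-, h2⟩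
          rw [hik] at h2; exact absurd h2 (ne_of_lt hβα)
        rw [if_neg hcond, if_neg h, hik]; ring
  -- the weighted sum vector
  set w : (↥((alphaGraph α u).neighborSet v) → ℝ) → EuclideanSpace ℝ (Fin d) :=
    fun x => ∑ i, x i • u i with hwdef
  have hwip : ∀ (x : ↥((alphaGraph α u).neighborSet v) → ℝ) (z : EuclideanSpace ℝ (Fin d)),
      rinner z (w x) = ∑ i, x i * rinner z (u i) := by
    intro x z
    unfold rinner
    rw [hwdef]
    rw [inner_sum]
    exact Finset.sum_congr rfl fun i _ => real_inner_smul_right _ _ _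
  have hww : ∀ x : ↥((alphaGraph α u).neighborSet v) → ℝ,
      rinner (w x) (w x) = ∑ i, x i * ∑ k, x k * rinner (u i) (u k) := by
    intro x
    rw [hwip x (w x)]
    refine Finset.sum_congr rfl fun i _ => ?_
    rw [rinner_comm, hwip x (u i)]
  -- the quadratic identity
  have hq : ∀ x : ↥((alphaGraph α u).neighborSet v) → ℝ,
      (α - β) * (x ⬝ᵥ (M *ᵥ x)) = rinner (w x) (w x) - β * (∑ i, x i) ^ 2 := by
    intro x
    rw [hww]
    simp only [dotProduct, mulVec, dotProduct, pow_two]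
    simp only [Finset.mul_sum, Finset.sum_mul, ← Finset.sum_sub_distrib]
    refine Finset.sum_congr rfl fun i _ => ?_
    refine Finset.sum_congr rfl fun k _ => ?_
    linear_combination (x i * x k) * hfact i k
  have hsum1 : ∀ x : ↥((alphaGraph α u).neighborSet v) → ℝ,
      (fun _ => (1:ℝ)) ⬝ᵥ x = ∑ i, x i := by
    intro x; simp [dotProduct]
  have hxj : ∀ x : ↥((alphaGraph α u).neighborSet v) → ℝ,
      x ⬝ᵥ (fun _ => (1:ℝ)) = ∑ i, x i := by
    intro x; simp [dotProduct]
  have hwv : ∀ x : ↥((alphaGraph α u).neighborSet v) → ℝ,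
      rinner (u v) (w x) = α * ∑ i, x i := by
    intro x
    rw [hwip, Finset.mul_sum]
    refine Finset.sum_congr rfl fun i _ => ?_
    rw [(hadj i).2]; ring
  have hsym : Mᵀ = M := by
    rw [hM]
    ext i k
    simp only [Matrix.transpose_apply, Matrix.add_apply, Matrix.submatrix_apply,
      Matrix.smul_apply, Matrix.one_apply, alphaAdj, Matrix.of_apply, smul_eq_mul]
    have h1 : ((k:Fin n) ≠ i ∧ rinner (u k) (u i) = α) ↔
        ((i:Fin n) ≠ k ∧ rinner (u i) (u k) = α) := by
      rw [rinner_comm, ne_comm]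
    rw [if_congr h1 rfl rfl, if_congr (eq_comm (a := k) (b := i)) rfl rfl]
  have hMdot : ∀ z y : ↥((alphaGraph α u).neighborSet v) → ℝ,
      (M *ᵥ z) ⬝ᵥ y = z ⬝ᵥ (M *ᵥ y) := by
    intro z y
    rw [dotProduct_comm, dotProduct_mulVec, ← mulVec_transpose, hsym, dotProduct_comm]
  -- kernel fact and existence
  have hker : ∀ y : ↥((alphaGraph α u).neighborSet v) → ℝ,
      M *ᵥ y = 0 → (fun _ => (1:ℝ)) ⬝ᵥ y = 0 := by
    intro y hy
    rw [hsum1]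
    have h0 := hq y
    rw [hy, dotProduct_zero, mul_zero] at h0
    have hnn : 0 ≤ rinner (w y) (w y) := real_inner_self_nonneg
    have h2 : (∑ i, y i) ^ 2 = 0 := by nlinarith [sq_nonneg (∑ i, y i)]
    exact pow_eq_zero_iff two_ne_zero |>.mp h2
  obtain ⟨x0, hx0⟩ := key_range M hsym _ hker
  set s : ℝ := ∑ i, x0 i with hs
  have hW : rinner (w x0) (w x0) = (α - β) * s + β * s ^ 2 := by
    have h0 := hq x0
    rw [hx0, hxj] at h0
    linarith
  have hCS : (α * s) ^ 2 ≤ rinner (w x0) (w x0) := by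
    have hcs : rinner (u v) (w x0) * rinner (u v) (w x0) ≤
        rinner (u v) (u v) * rinner (w x0) (w x0) :=
      real_inner_mul_inner_self_le (u v) (w x0)
    rw [hself v, hwv x0, one_mul] at hcs
    rw [sq]
    exact hcs
  have hkey : (α ^ 2 - β) * s ^ 2 ≤ (α - β) * s := by nlinarith [hW, hCS]
  have hsle : s ≤ (α - β) / (α ^ 2 - β) := by
    rw [le_div_iff₀ hα2β]
    nlinarith [hkey, hαβ, hα2β, sq_nonneg s]
  have hcltμ : (α - β) / (α ^ 2 - β) < μ := by
    rw [hμ, div_lt_div_iff₀ hα2β hαβ]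
    have h5 : 0 < -β * (1 - α) ^ 2 :=
      mul_pos (by linarith) (pow_pos (by linarith) 2)
    nlinarith [h5]
  have hsμ : s < μ := lt_of_le_of_lt hsle hcltμ
  refine ⟨⟨x0, hx0⟩, ?_, ?_⟩
  · -- Part 2
    intro N hN
    have hcalc : (fun _ => (1:ℝ)) ⬝ᵥ (N *ᵥ fun _ => (1:ℝ)) = s := by
      conv_lhs => rw [← hx0]
      rw [mulVec_mulVec, hMdot, mulVec_mulVec, ← Matrix.mul_assoc, hN, hx0, hxj]
    rw [hcalc]
    exact hsle
  · -- Part 3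
    set B : Matrix (Fin n) (Fin n) ℝ := alphaAdj α u + μ • 1 with hB
    set g : Option ↥((alphaGraph α u).neighborSet v) → Fin n :=
      fun o => o.elim v Subtype.val with hg
    set B' := B.submatrix g g with hB'
    have hB'ss : ∀ i k, B' (some i) (some k) = M i k := by
      intro i k
      rw [hM]
      simp only [hB', Matrix.submatrix_apply, hB, Matrix.add_apply, Matrix.smul_apply,
        Matrix.one_apply, smul_eq_mul, alphaAdj, Matrix.of_apply]
      have : g (some i) = (i : Fin n) := rfl
      rw [this, show g (some k) = (k : Fin n) from rfl]
      by_cases h : i = k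
      · subst h; simp
      · rw [if_neg h, if_neg (Subtype.coe_injective.ne h)]
    have hB'sn : ∀ i, B' (some i) none = 1 := by
      intro i
      have h1 : (i : Fin n) ≠ v := fun h => (hadj i).1 h.symm
      have h2 : rinner (u i) (u v) = α := by rw [rinner_comm]; exact (hadj i).2
      simp only [hB', Matrix.submatrix_apply, hB, Matrix.add_apply, alphaAdj, Matrix.of_apply,
        Matrix.smul_apply, Matrix.one_apply, smul_eq_mul]
      rw [show g (some i) = (i : Fin n) from rfl, show g none = v from rfl]
      rw [if_pos ⟨h1, h2⟩, if_neg h1]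
      ring
    have hB'ns : ∀ k, B' none (some k) = 1 := by
      intro k
      have h1 : v ≠ (k : Fin n) := (hadj k).1
      simp only [hB', Matrix.submatrix_apply, hB, Matrix.add_apply, alphaAdj, Matrix.of_apply,
        Matrix.smul_apply, Matrix.one_apply, smul_eq_mul]
      rw [show g (some k) = (k : Fin n) from rfl, show g none = v from rfl]
      rw [if_pos ⟨h1, (hadj k).2⟩, if_neg h1]
      ring
    have hB'nn : B' none none = μ := by
      simp only [hB', Matrix.submatrix_apply, hB, Matrix.add_apply, alphaAdj, Matrix.of_apply,
        Matrix.smul_apply, Matrix.one_apply, smul_eq_mul]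
      rw [show g none = v from rfl]
      simp
    -- kernel of B' injects into kernel of M
    have hkerinj : ∀ z, B' *ᵥ z = 0 → z none = 0 ∧ M *ᵥ (fun i => z (some i)) = 0 := by
      intro z hz
      have hz' : ∀ o, ∑ o', B' o o' * z o' = 0 := by
        intro o
        have := congrFun hz o
        simpa [Matrix.mulVec, dotProduct] using this
      have h1 : M *ᵥ (fun i => z (some i)) = fun _ => -(z none) := by
        funext i
        have h := hz' (some i)
        rw [Fintype.sum_option] at h
        simp only [hB'sn, hB'ss, one_mul] at h
        show ∑ k, M i k * z (some k) = -(z none)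
        linarith
      have h2 : μ * z none + ∑ k, z (some k) = 0 := by
        have h := hz' none
        rw [Fintype.sum_option] at h
        simp only [hB'nn, hB'ns, one_mul] at h
        linarith
      have hsy : ∑ k, z (some k) = -(z none) * s := by
        have e1 : (fun _ => (1:ℝ)) ⬝ᵥ (fun i => z (some i)) =
            (M *ᵥ x0) ⬝ᵥ (fun i => z (some i)) := by rw [hx0]
        rw [hMdot, h1, hsum1] at e1
        have e2 : x0 ⬝ᵥ (fun _ => -(z none)) = -(z none) * s := by
          rw [dotProduct, hs, Finset.mul_sum]
          exact Finset.sum_congr rfl fun i _ => mul_comm _ _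
        rw [e2] at e1
        exact e1
      have ht : z none = 0 := by
        have h3 : z none * (μ - s) = 0 := by linear_combination h2 - hsy
        rcases mul_eq_zero.mp h3 with h | h
        · exact h
        · exact absurd h (sub_ne_zero.mpr hsμ.ne')
      refine ⟨ht, ?_⟩
      rw [h1]
      funext i
      rw [ht]
      simp
    have hdim : Module.finrank ℝ (LinearMap.ker B'.mulVecLin) ≤
        Module.finrank ℝ (LinearMap.ker M.mulVecLin) := by
      have hmap : ∀ z ∈ LinearMap.ker B'.mulVecLin,
          (LinearMap.funLeft ℝ ℝ some) z ∈ LinearMap.ker M.mulVecLin := by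
        intro z hz
        have h := (hkerinj z (by simpa using hz)).2
        exact LinearMap.mem_ker.2 h
      have hinj : Function.Injective
          ((LinearMap.funLeft ℝ ℝ some).restrict hmap) := by
        intro z1 z2 h12
        have h12' := congrArg Subtype.val h12
        apply Subtype.ext
        funext o
        cases o with
        | none =>
          rw [(hkerinj z1.val z1.2).1, (hkerinj z2.val z2.2).1]
        | some i => exact congrFun h12' i
      exact LinearMap.finrank_le_finrank_of_injective hinj
    have r1 : M.rank + Module.finrank ℝ (LinearMap.ker M.mulVecLin) =
        Fintype.card ↥((alphaGraph α u).neighborSet v) := by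
      have h := LinearMap.finrank_range_add_finrank_ker M.mulVecLin
      rw [Module.finrank_pi] at h
      exact h
    have r2 : B'.rank + Module.finrank ℝ (LinearMap.ker B'.mulVecLin) =
        Fintype.card ↥((alphaGraph α u).neighborSet v) + 1 := by
      have h := LinearMap.finrank_range_add_finrank_ker B'.mulVecLin
      rw [Module.finrank_pi, Fintype.card_option] at h
      exact h
    have hstep : M.rank + 1 ≤ B'.rank := by omega
    -- rank of B' is at most rank of B
    set P : Matrix (Option ↥((alphaGraph α u).neighborSet v)) (Fin n) ℝ :=
      Matrix.of fun o k => if g o = k then 1 else 0 with hP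
    have hPB1 : P * B = B.submatrix g id := by
      ext o l
      simp only [Matrix.mul_apply, hP, Matrix.of_apply, Matrix.submatrix_apply, id_eq,
        ite_mul, one_mul, zero_mul]
      rw [Finset.sum_ite_eq Finset.univ (g o) (fun k => B k l)]
      simp
    have hPB : P * B * Pᵀ = B' := by
      rw [hPB1]
      ext o o'
      simp only [Matrix.mul_apply, hP, Matrix.of_apply, Matrix.transpose_apply,
        Matrix.submatrix_apply, id_eq, hB', mul_ite, mul_one, mul_zero]
      rw [Finset.sum_ite_eq Finset.univ (g o') (fun l => B (g o) l)]
      simp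
    have hrankB' : B'.rank ≤ B.rank := by
      rw [← hPB]
      exact le_trans (Matrix.rank_mul_le_left _ _) (Matrix.rank_mul_le_right _ _)
    have hfin : M.rank + 1 ≤ B.rank := le_trans hstep hrankB'
    omega
end
end

section
/- Let -1 ≤ β < α < 1 with β < 0, and set μ = (1-β)/(α-β). Let G be the associated α-graph of a spherical {α,β}-code, with adjacency matrix A_G. For any vertex u of G, let H = G - N_G[u] be the subgraph of G induced by the vertices outside the closed neighborhood N_G[u] = N_G(u) ∪ {u}. Then the all-ones vector j lies in the column space of A_H + μI, for every {1}-inverse N of A_H + μI one has jᵀNj ≤ (α-β)/(-β(1-β)), and rank(A_H + μI) ≤ rank(A_G + μI) - 1. -/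
open Matrix

noncomputable section

open Module

lemma auxRange {m p : Type*} [Fintype m] [Fintype p] (Z : Matrix m p ℝ) :
    LinearMap.range (Zᵀ * Z).mulVecLin = LinearMap.range Zᵀ.mulVecLin := by
  apply Submodule.eq_of_le_of_finrank_le
  · rintro y ⟨x, rfl⟩
    exact ⟨Z *ᵥ x, by simp [Matrix.mulVecLin_apply]⟩
  · show Matrix.rank Zᵀ ≤ Matrix.rank (Zᵀ * Z)
    rw [Matrix.rank_transpose_mul_self, Matrix.rank_transpose]

lemma auxRankSmul {p q : Type*} [Fintype p] [Fintype q] [DecidableEq p] {c : ℝ} (hc : c ≠ 0)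
    (B : Matrix p q ℝ) : (c • B).rank = B.rank := by
  have h : c • B = (c • (1 : Matrix p p ℝ)) * B := by
    rw [smul_mul, Matrix.one_mul]
  have hdet : IsUnit (c • (1 : Matrix p p ℝ)).det := by
    rw [det_smul, det_one, mul_one]
    exact (pow_ne_zero _ hc).isUnit
  have := Matrix.rank_mul_eq_right_of_isUnit_det (c • (1 : Matrix p p ℝ)) B hdet
  rw [h]
  exact this

lemma auxBlockRank {p : Type*} [Fintype p] [DecidableEq p] (M : Matrix p p ℝ) {μ : ℝ}
    (hμ : μ ≠ 0) :
    M.rank + 1 ≤ (fromBlocks M 0 0 (Matrix.of (fun _ _ : Unit => μ))).rank := by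
  set S := fromBlocks M 0 0 (Matrix.of (fun _ _ : Unit => μ)) with hS
  set φ : ((p ⊕ Unit) → ℝ) →ₗ[ℝ] (p → ℝ) := LinearMap.funLeft ℝ ℝ Sum.inl with hφ
  set f : LinearMap.range S.mulVecLin →ₗ[ℝ] (p → ℝ) :=
    φ.comp (LinearMap.range S.mulVecLin).subtype with hf
  have happ : ∀ (x : (p ⊕ Unit) → ℝ) (i : p), (S *ᵥ x) (Sum.inl i) = (M *ᵥ (x ∘ Sum.inl)) i := by
    intro x i
    rw [hS, fromBlocks_mulVec]
    simp
  have hrange : LinearMap.range f = LinearMap.range M.mulVecLin := by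
    ext y; constructor
    · rintro ⟨⟨w, x, rfl⟩, rfl⟩
      refine ⟨x ∘ Sum.inl, ?_⟩
      ext i
      simp only [Matrix.mulVecLin_apply, hf, LinearMap.comp_apply, Submodule.subtype_apply, hφ,
        LinearMap.funLeft_apply]
      exact (happ x i).symm
    · rintro ⟨x, rfl⟩
      refine ⟨⟨S *ᵥ (Sum.elim x 0), ⟨Sum.elim x 0, rfl⟩⟩, ?_⟩
      ext i
      simp only [Matrix.mulVecLin_apply, hf, LinearMap.comp_apply, Submodule.subtype_apply, hφ,
        LinearMap.funLeft_apply]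
      rw [happ]
      simp
  have hSval : ∀ i, (S *ᵥ (Sum.elim 0 1)) i = Sum.elim (0 : p → ℝ) (fun _ => μ) i := by
    intro i
    rw [hS, fromBlocks_mulVec]
    cases i with
    | inl i => simp
    | inr i => simp [Matrix.mulVec, dotProduct]
  have hmemker : (⟨S *ᵥ (Sum.elim 0 1), ⟨Sum.elim 0 1, rfl⟩⟩ :
      LinearMap.range S.mulVecLin) ∈ LinearMap.ker f := by
    simp only [LinearMap.mem_ker]
    ext i
    simp only [hf, LinearMap.comp_apply, Submodule.subtype_apply, hφ, LinearMap.funLeft_apply]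
    rw [hSval]
    simp
  have hne : (⟨S *ᵥ (Sum.elim 0 1), ⟨Sum.elim 0 1, rfl⟩⟩ :
      LinearMap.range S.mulVecLin) ≠ 0 := by
    intro h
    rw [Subtype.ext_iff] at h
    have h2 := congr_fun h (Sum.inr ())
    simp only [Submodule.coe_zero, Pi.zero_apply] at h2
    rw [hSval (Sum.inr ())] at h2
    simp at h2
    exact hμ h2
  have hker : 0 < finrank ℝ (LinearMap.ker f) := by
    refine (Module.finrank_pos_iff_exists_ne_zero (R := ℝ) (M := LinearMap.ker f)).mpr ?_
    refine ⟨⟨_, hmemker⟩, ?_⟩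
    intro h
    rw [Subtype.ext_iff] at h
    exact hne h
  have hrn := LinearMap.finrank_range_add_finrank_ker f
  rw [hrange] at hrn
  have h1 : finrank ℝ (LinearMap.range S.mulVecLin) = S.rank := rfl
  have h2 : finrank ℝ (LinearMap.range M.mulVecLin) = M.rank := rfl
  rw [h1, h2] at hrn
  omega

open scoped Classical

/-- for the `α`-graph `G` of a spherical `{α,β}`-code and any vertex `v`,
the subgraph `H = G - N_G[v]` induced by the complement of the closed neighborhood of `v`
satisfies: `j` lies in the column space of `A_H + μI`, `jᵀNj ≤ (α-β)/(-β(1-β))` for any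
`{1}`-inverse `N`, and `rank(A_H + μI) ≤ rank(A_G + μI) - 1`. -/
theorem stmt7 (d n : ℕ)
    (α β μ : ℝ) (hβ₁ : -1 ≤ β) (hβα : β < α) (hα : α < 1) (hβ₀ : β < 0)
    (hμ : μ = (1 - β) / (α - β))
    (u : Fin n → EuclideanSpace ℝ (Fin d)) (hu : IsSphericalCode α β u)
    (v : Fin n)
    (M : Matrix ↥(((alphaGraph α u).neighborSet v ∪ {v})ᶜ)
        ↥(((alphaGraph α u).neighborSet v ∪ {v})ᶜ) ℝ)
    (hM : M = (alphaAdj α u).submatrix Subtype.val Subtype.val + μ • 1) :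
    (∃ x, M *ᵥ x = fun _ => 1) ∧
    (∀ N, M * N * M = M →
      (fun _ => (1 : ℝ)) ⬝ᵥ (N *ᵥ fun _ => 1) ≤ (α - β) / (-β * (1 - β))) ∧
    (M.rank : ℤ) ≤ ((alphaAdj α u + μ • (1 : Matrix (Fin n) (Fin n) ℝ)).rank : ℤ) - 1 := by
  have hαβ : (0:ℝ) < α - β := by linarith
  have hαβ' : α - β ≠ 0 := ne_of_gt hαβ
  have hβ' : β ≠ 0 := ne_of_lt hβ₀
  have hμpos : 0 < μ := by rw [hμ]; apply div_pos <;> linarith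
  obtain ⟨hunit, hcode⟩ := hu
  set c : ℝ := Real.sqrt (-β) with hcdef
  have hc2 : c * c = -β := Real.mul_self_sqrt (by linarith)
  -- inner products as sums
  have hrin : ∀ x y : EuclideanSpace ℝ (Fin d), rinner x y = ∑ a, x a * y a := by
    intro x y
    rw [rinner, PiLp.inner_apply x y]
    exact Finset.sum_congr rfl fun a _ => by
      simp [RCLike.inner_apply, mul_comm]
  have hself : ∀ i, rinner (u i) (u i) = 1 := by
    intro i
    rw [rinner, real_inner_self_eq_norm_sq, hunit i, one_pow]
  -- membership facts
  have hmem : ∀ i : ↥(((alphaGraph α u).neighborSet v ∪ {v})ᶜ),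
      (i : Fin n) ≠ v ∧ rinner (u i) (u v) = β := by
    intro i
    have h2 := i.2
    simp only [Set.mem_compl_iff, Set.mem_union, SimpleGraph.mem_neighborSet, Set.mem_singleton_iff,
      not_or] at h2
    obtain ⟨hadj, hne⟩ := h2
    refine ⟨hne, ?_⟩
    have hne' : v ≠ (i : Fin n) := fun h => hne h.symm
    have : rinner (u v) (u i) ≠ α := fun h => hadj ⟨hne', h⟩
    rcases hcode v i hne' with h | h
    · exact absurd h this
    · rw [rinner_comm]; exact h
  have hμ' : (α - β) * μ = 1 - β := by
    rw [hμ]; field_simp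
  -- lifted vectors in ℝ^(d+1)
  set X : Matrix (Fin d ⊕ Unit) (Fin n) ℝ :=
    Matrix.of (fun a i => Sum.elim (fun b => u i b) (fun _ => c) a) with hX
  have hXX : ∀ i k : Fin n, (Xᵀ * X) i k = rinner (u i) (u k) - β := by
    intro i k
    rw [Matrix.mul_apply]
    simp only [hX, Matrix.transpose_apply, Matrix.of_apply]
    rw [Fintype.sum_sum_type]
    simp only [Sum.elim_inl, Sum.elim_inr]
    rw [hrin]
    simp only [Finset.sum_const, Finset.card_univ, Fintype.card_unit, one_smul]
    rw [hc2]
    ring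
  have hoff : ∀ i k : Fin n, i ≠ k →
      (α - β) * (alphaAdj α u i k) = rinner (u i) (u k) - β := by
    intro i k hik
    by_cases hik2 : rinner (u i) (u k) = α
    · simp [alphaAdj, hik, hik2]
    · rcases hcode i k hik with h | h
      · exact absurd h hik2
      · have h0 : alphaAdj α u i k = 0 := by
          simp only [alphaAdj, Matrix.of_apply, ite_eq_right_iff, and_imp]
          intro _ hc
          exact absurd hc hik2
        rw [h0, h, mul_zero, sub_self]
  have hMG : (α - β) • (alphaAdj α u + μ • (1 : Matrix (Fin n) (Fin n) ℝ)) = Xᵀ * X := by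
    ext i k
    rw [hXX]
    simp only [Matrix.smul_apply, Matrix.add_apply, smul_eq_mul]
    by_cases hik : i = k
    · subst hik
      rw [Matrix.one_apply_eq, hself]
      have : alphaAdj α u i i = 0 := by simp [alphaAdj]
      rw [this]
      rw [mul_one] at *
      linarith [hμ']
    · rw [Matrix.one_apply_ne hik, mul_zero, add_zero]
      exact hoff i k hik
  -- restriction to the complement of the closed neighborhood
  set Z : Matrix (Fin d ⊕ Unit) ↥(((alphaGraph α u).neighborSet v ∪ {v})ᶜ) ℝ :=
    Matrix.of (fun a i => X a (i : Fin n)) with hZ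
  have hZX : ∀ i k, (Zᵀ * Z) i k = (Xᵀ * X) (i : Fin n) (k : Fin n) := by
    intro i k
    rw [Matrix.mul_apply, Matrix.mul_apply]
    rfl
  have hMent : ∀ i k, (α - β) * M i k = rinner (u (i : Fin n)) (u (k : Fin n)) - β := by
    intro i k
    rw [hM]
    simp only [Matrix.add_apply, Matrix.smul_apply, Matrix.submatrix_apply, smul_eq_mul]
    by_cases hik : i = k
    · subst hik
      rw [Matrix.one_apply_eq, hself]
      have : alphaAdj α u (i : Fin n) (i : Fin n) = 0 := by simp [alphaAdj]
      rw [this]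
      rw [mul_one] at *
      linarith [hμ']
    · rw [Matrix.one_apply_ne hik, mul_zero, add_zero]
      exact hoff _ _ (Subtype.coe_injective.ne hik)
  have hZZ : (α - β) • M = Zᵀ * Z := by
    ext i k
    rw [hZX, hXX, Matrix.smul_apply, smul_eq_mul]
    exact hMent i k
  have hMeq : M = (α - β)⁻¹ • (Zᵀ * Z) := by
    rw [← hZZ, smul_smul, inv_mul_cancel₀ hαβ', one_smul]
  have hMsym : Mᵀ = M := by
    rw [hMeq, Matrix.transpose_smul, Matrix.transpose_mul, Matrix.transpose_transpose]
  -- the test vector p0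
  set p0 : (Fin d ⊕ Unit) → ℝ := Sum.elim (fun b => u v b) (fun _ => c / β) with hp0
  have hβ1 : β - 1 ≠ 0 := by intro h; linarith
  have hZp0 : Zᵀ *ᵥ p0 = fun _ => β - 1 := by
    ext i
    rw [Matrix.mulVec, dotProduct]
    rw [Fintype.sum_sum_type]
    simp only [hZ, hX, Matrix.transpose_apply, Matrix.of_apply, hp0, Sum.elim_inl, Sum.elim_inr]
    rw [← hrin, (hmem i).2]
    have h1 : ∑ _ : Unit, c * (c / β) = -1 := by
      rw [Finset.sum_const]
      simp only [Finset.card_univ, Fintype.card_unit, one_smul]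
      rw [mul_div_assoc']
      rw [hc2]
      field_simp
    rw [h1]
    ring
  -- Claim 1: j is in the column space
  have hjmem : (fun _ => (α - β)) ∈ LinearMap.range (Zᵀ * Z).mulVecLin := by
    rw [auxRange]
    refine ⟨((α - β)/(β - 1)) • p0, ?_⟩
    rw [Matrix.mulVecLin_apply, Matrix.mulVec_smul, hZp0]
    ext i
    simp only [Pi.smul_apply, smul_eq_mul]
    field_simp
  obtain ⟨x, hx⟩ := hjmem
  rw [Matrix.mulVecLin_apply] at hx
  have hMx : M *ᵥ x = fun _ => 1 := by
    rw [hMeq, Matrix.smul_mulVec, hx]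
    ext i
    simp only [Pi.smul_apply, smul_eq_mul]
    rw [inv_mul_cancel₀ hαβ']
  refine ⟨⟨x, hMx⟩, ?_, ?_⟩
  · -- Claim 2
    intro N hN
    set S0 : ℝ := ∑ i, x i with hS0
    have hxj : x ⬝ᵥ (fun _ => (1:ℝ)) = S0 := by simp [dotProduct, hS0]
    have hswap : ∀ (A : Matrix ↥(((alphaGraph α u).neighborSet v ∪ {v})ᶜ)
        ↥(((alphaGraph α u).neighborSet v ∪ {v})ᶜ) ℝ)
        (y z : ↥(((alphaGraph α u).neighborSet v ∪ {v})ᶜ) → ℝ),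
        (A *ᵥ y) ⬝ᵥ z = y ⬝ᵥ (Aᵀ *ᵥ z) := by
      intro A y z
      rw [Matrix.dotProduct_mulVec, Matrix.vecMul_transpose]
    have key : (fun _ => (1:ℝ)) ⬝ᵥ (N *ᵥ fun _ => 1) = S0 := by
      calc (fun _ => (1:ℝ)) ⬝ᵥ (N *ᵥ fun _ => 1)
          = (M *ᵥ x) ⬝ᵥ (N *ᵥ (M *ᵥ x)) := by rw [← hMx]
        _ = (M *ᵥ x) ⬝ᵥ ((N * M) *ᵥ x) := by rw [Matrix.mulVec_mulVec]
        _ = x ⬝ᵥ (Mᵀ *ᵥ ((N * M) *ᵥ x)) := hswap M x _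
        _ = x ⬝ᵥ ((Mᵀ * (N * M)) *ᵥ x) := by rw [Matrix.mulVec_mulVec]
        _ = x ⬝ᵥ (M *ᵥ x) := by rw [hMsym, ← Matrix.mul_assoc, hN]
        _ = S0 := by rw [hMx]; exact hxj
    rw [key]
    -- now bound S0
    have hzz : (α - β) * S0 = (Z *ᵥ x) ⬝ᵥ (Z *ᵥ x) := by
      have h2 : x ⬝ᵥ ((Zᵀ * Z) *ᵥ x) = (Z *ᵥ x) ⬝ᵥ (Z *ᵥ x) := by
        rw [← Matrix.mulVec_mulVec, Matrix.dotProduct_mulVec, Matrix.vecMul_transpose]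
      rw [hx] at h2
      rw [← h2, dotProduct]
      rw [hS0, Finset.mul_sum]
      exact Finset.sum_congr rfl fun i _ => by ring
    have hS0nn : 0 ≤ S0 := by
      have h2 : 0 ≤ (Z *ᵥ x) ⬝ᵥ (Z *ᵥ x) :=
        Finset.sum_nonneg fun a _ => mul_self_nonneg _
      nlinarith
    have hpz : ∑ a, p0 a * (Z *ᵥ x) a = (β - 1) * S0 := by
      have h2 : p0 ⬝ᵥ (Z *ᵥ x) = (Zᵀ *ᵥ p0) ⬝ᵥ x := by
        rw [Matrix.dotProduct_mulVec, ← Matrix.mulVec_transpose]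
      rw [show (∑ a, p0 a * (Z *ᵥ x) a) = p0 ⬝ᵥ (Z *ᵥ x) from rfl, h2, hZp0]
      rw [dotProduct, hS0, Finset.mul_sum]
    have hpp : (∑ a, p0 a ^ 2) * β = β - 1 := by
      rw [Fintype.sum_sum_type]
      simp only [hp0, Sum.elim_inl, Sum.elim_inr]
      have h3 : ∑ b, (u v b) ^ 2 = 1 := by
        have := hself v
        rw [hrin] at this
        rw [← this]
        exact Finset.sum_congr rfl fun b _ => by ring
      rw [h3]
      have h4 : ∑ _ : Unit, (c / β) ^ 2 = -(1/β) := by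
        rw [Finset.sum_const]
        simp only [Finset.card_univ, Fintype.card_unit, one_smul]
        rw [div_pow, sq, hc2]
        field_simp
      rw [h4]
      field_simp
      ring
    have hcs := Finset.sum_mul_sq_le_sq_mul_sq Finset.univ p0 (Z *ᵥ x)
    have hzz2 : ∑ a, (Z *ᵥ x) a ^ 2 = (α - β) * S0 := by
      rw [hzz, dotProduct]
      exact Finset.sum_congr rfl fun a _ => by ring
    have hcs' : ((β - 1) * S0) ^ 2 ≤ (∑ a, p0 a ^ 2) * ((α - β) * S0) := by
      rw [← hpz, ← hzz2]
      exact hcs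
    rw [le_div_iff₀ (mul_pos (neg_pos.mpr hβ₀) (by linarith))]
    rcases eq_or_lt_of_le hS0nn with h0 | h0
    · rw [← h0, zero_mul]
      linarith
    · have e1 : (0:ℝ) < -β := by linarith
      have e2 : (-β) * (((β - 1) * S0) ^ 2) ≤ (-β) * ((∑ a, p0 a ^ 2) * ((α - β) * S0)) :=
        mul_le_mul_of_nonneg_left hcs' e1.le
      have e3 : (-β) * ((∑ a, p0 a ^ 2) * ((α - β) * S0)) = (1 - β) * ((α - β) * S0) := by
        have h5 : (-β) * (∑ a, p0 a ^ 2) = 1 - β := by linarith [hpp]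
        calc (-β) * ((∑ a, p0 a ^ 2) * ((α - β) * S0))
            = ((-β) * (∑ a, p0 a ^ 2)) * ((α - β) * S0) := by ring
          _ = (1 - β) * ((α - β) * S0) := by rw [h5]
      have e4 : (-β) * (((β - 1) * S0) ^ 2) ≤ (1 - β) * ((α - β) * S0) := e3 ▸ e2
      have e6 : (0:ℝ) < (1 - β) * S0 := mul_pos (by linarith) h0
      have e5 : ((-β) * (1 - β) * S0) * ((1 - β) * S0) ≤ (α - β) * ((1 - β) * S0) := by
        calc ((-β) * (1 - β) * S0) * ((1 - β) * S0)
            = (-β) * (((β - 1) * S0) ^ 2) := by ring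
          _ ≤ (1 - β) * ((α - β) * S0) := e4
          _ = (α - β) * ((1 - β) * S0) := by ring
      have e7 := (mul_le_mul_iff_left₀ e6).mp e5
      calc S0 * (-β * (1 - β)) = (-β) * (1 - β) * S0 := by ring
        _ ≤ α - β := e7
  · -- Claim 3
    set S := fromBlocks M 0 0 (Matrix.of (fun _ _ : Unit => μ)) with hSdef
    set g : (↥(((alphaGraph α u).neighborSet v ∪ {v})ᶜ) ⊕ Unit) → Fin n :=
      Sum.elim Subtype.val (fun _ => v) with hg
    set Y : Matrix (Fin d ⊕ Unit) _ ℝ := Matrix.of (fun a j => X a (g j)) with hY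
    have hYapp : ∀ j j', (Yᵀ * Y) j j' = (Xᵀ * X) (g j) (g j') := by
      intro j j'
      rw [Matrix.mul_apply, Matrix.mul_apply]
      rfl
    have hYY : (α - β) • S = Yᵀ * Y := by
      ext j j'
      rw [hYapp, hXX, Matrix.smul_apply, smul_eq_mul]
      cases j with
      | inl i =>
        cases j' with
        | inl k =>
          simp only [hSdef, hg, Matrix.fromBlocks_apply₁₁, Sum.elim_inl]
          exact hMent i k
        | inr _ =>
          simp only [hSdef, hg, Matrix.fromBlocks_apply₁₂, Sum.elim_inl, Sum.elim_inr,
            Matrix.zero_apply, mul_zero]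
          rw [(hmem i).2]
          ring
      | inr _ =>
        cases j' with
        | inl k =>
          simp only [hSdef, hg, Matrix.fromBlocks_apply₂₁, Sum.elim_inl, Sum.elim_inr,
            Matrix.zero_apply, mul_zero]
          rw [rinner_comm, (hmem k).2]
          ring
        | inr _ =>
          simp only [hSdef, hg, Matrix.fromBlocks_apply₂₂, Sum.elim_inr, Matrix.of_apply]
          rw [hself]
          linarith [hμ']
    have hrankS : S.rank = Y.rank := by
      rw [← auxRankSmul hαβ' S, hYY, Matrix.rank_transpose_mul_self]
    set P : Matrix (Fin n) (↥(((alphaGraph α u).neighborSet v ∪ {v})ᶜ) ⊕ Unit) ℝ :=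
      Matrix.of (fun k j => if k = g j then (1:ℝ) else 0) with hP
    have hYXP : Y = X * P := by
      ext a j
      rw [Matrix.mul_apply]
      simp [hP, hY, mul_ite, mul_one, mul_zero, Finset.sum_ite_eq']
    have h5 : Y.rank ≤ X.rank := by
      rw [hYXP]
      exact Matrix.rank_mul_le_left X P
    have h6 : (alphaAdj α u + μ • (1 : Matrix (Fin n) (Fin n) ℝ)).rank = X.rank := by
      rw [← auxRankSmul hαβ' (alphaAdj α u + μ • (1 : Matrix (Fin n) (Fin n) ℝ)), hMG,
        Matrix.rank_transpose_mul_self]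
    have h7 := auxBlockRank M (ne_of_gt hμpos)
    rw [← hSdef] at h7
    have hfin : M.rank + 1 ≤ (alphaAdj α u + μ • (1 : Matrix (Fin n) (Fin n) ℝ)).rank := by
      omega
    omega
end
end

section
/- Let -1 ≤ β < α < 1 with α > 0, and set λ = (1-α)/(α-β). Let S be a spherical {α,β}-code in ℝ^d of size n and rank r, and let A be the adjacency matrix of the associated β-graph Γ_β(S). If λI - A is not positive semidefinite (i.e., the largest eigenvalue of Γ_β(S) exceeds λ), then: λI - A has exactly one negative eigenvalue, the all-ones vector j lies in the column space of λI - A, for every {1}-inverse N of λI - A one has jᵀNj ≤ (α-β)/(-α), and rank(λI - A) = r + 1 if jᵀNj = (α-β)/(-α), while rank(λI - A) = r otherwise. -/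
open Matrix

noncomputable section

/-- Adjacency matrix of the associated `β`-graph `Γ_β(S)`. -/
def betaAdj (β : ℝ) {d n : ℕ} (u : Fin n → EuclideanSpace ℝ (Fin d)) :
    Matrix (Fin n) (Fin n) ℝ :=
  Matrix.of fun i j => if i ≠ j ∧ rinner (u i) (u j) = β then 1 else 0

/-- Inner product on Euclidean space as a dot product. -/
lemma innerDot {n : ℕ} (a b : EuclideanSpace ℝ (Fin n)) :
    (inner ℝ a b : ℝ) = (a : Fin n → ℝ) ⬝ᵥ (b : Fin n → ℝ) := by
  simp [PiLp.inner_apply, dotProduct, RCLike.inner_apply]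
  exact Finset.sum_congr rfl fun _ _ => mul_comm _ _

/-- Symmetric matrices can be moved across the dot product. -/
lemma symmDot {n : ℕ} (A : Matrix (Fin n) (Fin n) ℝ) (h : Aᵀ = A) (v w : Fin n → ℝ) :
    (A *ᵥ v) ⬝ᵥ w = v ⬝ᵥ (A *ᵥ w) := by
  rw [Matrix.dotProduct_mulVec, ← Matrix.mulVec_transpose, h]

/-- Rank-nullity for square real matrices. -/
lemma rank_add_ker {n : ℕ} (A : Matrix (Fin n) (Fin n) ℝ) :
    A.rank + Module.finrank ℝ (LinearMap.ker A.mulVecLin) = n := by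
  rw [Matrix.rank, LinearMap.finrank_range_add_finrank_ker]
  simp

/-- If a real symmetric matrix kills every vector orthogonal to its range obstruction,
membership in the column space follows; here: `j` is in the column space provided every
kernel vector is orthogonal to `j`. -/
lemma mem_col_of_ker_orth {n : ℕ} (M : Matrix (Fin n) (Fin n) ℝ) (hsym : Mᵀ = M)
    (j : Fin n → ℝ) (h : ∀ z : Fin n → ℝ, M *ᵥ z = 0 → j ⬝ᵥ z = 0) :
    ∃ x : Fin n → ℝ, M *ᵥ x = j := by
  classical
  let T : EuclideanSpace ℝ (Fin n) →ₗ[ℝ] EuclideanSpace ℝ (Fin n) :=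
    { toFun := fun x => WithLp.toLp 2 (M *ᵥ (x : Fin n → ℝ))
      map_add' := fun x y => by simp [Matrix.mulVec_add]
      map_smul' := fun c x => by simp [Matrix.mulVec_smul] }
  set W : Submodule ℝ (EuclideanSpace ℝ (Fin n)) := LinearMap.range T with hW
  by_cases hjW : (WithLp.toLp 2 j) ∈ W
  · obtain ⟨x, hx⟩ := hjW
    exact ⟨x.ofLp, congrArg WithLp.ofLp hx⟩
  · exfalso
    set z : EuclideanSpace ℝ (Fin n) := (WithLp.toLp 2 j) - ((W.orthogonalProjectionOnto (WithLp.toLp 2 j) : EuclideanSpace ℝ (Fin n))) with hz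
    have hzW : z ∈ Wᗮ := W.sub_starProjection_mem_orthogonal _
    have hMz : M *ᵥ (z : Fin n → ℝ) = 0 := by
      funext i
      have h1 : ∀ y : EuclideanSpace ℝ (Fin n), (inner ℝ (T y) z : ℝ) = 0 := by
        intro y
        exact (Submodule.mem_orthogonal W z).mp hzW (T y) (LinearMap.mem_range_self T y)
      have h2 : (inner ℝ (T (WithLp.toLp 2 (Pi.single i 1 : Fin n → ℝ))) z : ℝ)
          = (M *ᵥ (z : Fin n → ℝ)) i := by
        rw [innerDot]
        show ((M *ᵥ (Pi.single i 1 : Fin n → ℝ)) ⬝ᵥ (z : Fin n → ℝ)) = _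
        rw [symmDot M hsym]
        simp [dotProduct, Pi.single_apply]
      rw [← h2, h1]
      rfl
    have hjz := h z hMz
    have hinner : (inner ℝ (WithLp.toLp 2 j) z : ℝ) = 0 := by
      rw [innerDot]; exact hjz
    have hproj : (inner ℝ (((W.orthogonalProjectionOnto (WithLp.toLp 2 j) : EuclideanSpace ℝ (Fin n)))) z : ℝ) = 0 :=
      (Submodule.mem_orthogonal W z).mp hzW _ (SetLike.coe_mem _)
    have hzz : (inner ℝ z z : ℝ) = 0 := by
      have : (WithLp.toLp 2 j) = z + ((W.orthogonalProjectionOnto (WithLp.toLp 2 j) : EuclideanSpace ℝ (Fin n))) := by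
        rw [hz]; abel
      rw [this, inner_add_left, hproj, add_zero] at hinner
      exact hinner
    have hz0 : z = 0 := inner_self_eq_zero.mp hzz
    apply hjW
    have : (WithLp.toLp 2 j) = ((W.orthogonalProjectionOnto (WithLp.toLp 2 j) : EuclideanSpace ℝ (Fin n))) := by
      have := sub_eq_zero.mp (hz ▸ hz0 : (WithLp.toLp 2 j) - _ = 0)
      exact this
    rw [this]
    exact SetLike.coe_mem _

set_option maxHeartbeats 1000000
/-- for a spherical `{α,β}`-code with `α > 0`, `λ = (1-α)/(α-β)` and `A`
the adjacency matrix of the associated `β`-graph, if `λI - A` is not positive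
semidefinite then it has exactly one negative eigenvalue, the all-ones vector lies in its
column space, every `{1}`-inverse `N` satisfies `jᵀNj ≤ (α-β)/(-α)`, and
`rank(λI - A)` is `r + 1` if `jᵀNj = (α-β)/(-α)` and `r` otherwise. -/
theorem stmt11 (d n : ℕ)
    (α β lam : ℝ) (hβ₁ : -1 ≤ β) (hβα : β < α) (hα : α < 1) (hα₀ : 0 < α)
    (hlam : lam = (1 - α) / (α - β))
    (u : Fin n → EuclideanSpace ℝ (Fin d)) (hu : IsSphericalCode α β u)
    (r : ℕ) (hr : r = Module.finrank ℝ (Submodule.span ℝ (Set.range u)))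
    (M : Matrix (Fin n) (Fin n) ℝ)
    (hM : M = lam • (1 : Matrix (Fin n) (Fin n) ℝ) - betaAdj β u)
    (hherm : M.IsHermitian)
    (hnotpsd : ¬ M.PosSemidef) :
    (Finset.univ.filter fun i => hherm.eigenvalues i < 0).card = 1 ∧
    (∃ x : Fin n → ℝ, M *ᵥ x = fun _ => 1) ∧
    ∀ N : Matrix (Fin n) (Fin n) ℝ, M * N * M = M →
      (fun _ => (1 : ℝ)) ⬝ᵥ (N *ᵥ fun _ => 1) ≤ (α - β) / (-α) ∧
      M.rank =
        (if (fun _ => (1 : ℝ)) ⬝ᵥ (N *ᵥ fun _ => 1) = (α - β) / (-α) then r + 1 else r) := by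
  classical
  have hαβ : (0:ℝ) < α - β := sub_pos.2 hβα
  set jv : Fin n → ℝ := fun _ => 1 with hjv
  set B : Matrix (Fin d) (Fin n) ℝ := Matrix.of fun k i => u i k with hB
  set G : Matrix (Fin n) (Fin n) ℝ := Bᴴ * B with hG
  have hGpsd : G.PosSemidef := Matrix.posSemidef_conjTranspose_mul_self B
  have hGsym : Gᵀ = G := by
    have := hGpsd.1
    rw [Matrix.IsHermitian] at this
    simpa using this
  have hMsym : Mᵀ = M := by
    have := hherm
    rw [Matrix.IsHermitian] at this
    simpa using this
  have hGent : ∀ i k, G i k = rinner (u i) (u k) := by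
    intro i k
    simp [hG, hB, Matrix.mul_apply, rinner, PiLp.inner_apply, RCLike.inner_apply,
      Matrix.conjTranspose_apply]
    exact Finset.sum_congr rfl fun _ _ => mul_comm _ _
  have hGdiag : ∀ i, G i i = 1 := by
    intro i
    rw [hGent, rinner, real_inner_self_eq_norm_mul_norm, hu.1 i]
    norm_num
  -- the fundamental matrix identity
  have hGM : G = (α - β) • M + α • (Matrix.of fun _ _ => (1:ℝ)) := by
    ext i k
    simp only [Matrix.add_apply, Matrix.smul_apply, Matrix.of_apply, smul_eq_mul, hM,
      Matrix.sub_apply, betaAdj, mul_one]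
    by_cases hik : i = k
    · subst hik
      rw [hGdiag i]
      simp only [Matrix.smul_apply, Matrix.one_apply_eq, ne_eq, not_true_eq_false,
        false_and, if_false, smul_eq_mul, mul_one, sub_zero]
      rw [hlam]
      field_simp
      ring
    · rcases hu.2 i k hik with ha | hb
      · have hne : ¬ (i ≠ k ∧ rinner (u i) (u k) = β) := by
          rintro ⟨-, hcon⟩
          rw [ha] at hcon
          exact absurd hcon (ne_of_gt hβα)
        rw [hGent i k, ha]
        simp only [Matrix.smul_apply, Matrix.one_apply_ne hik, smul_eq_mul]
        simp only [hβα.ne', and_false, if_false]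
        ring
      · have hyes : (i ≠ k ∧ rinner (u i) (u k) = β) := ⟨hik, hb⟩
        rw [hGent i k, hb]
        simp only [Matrix.smul_apply, Matrix.one_apply_ne hik, smul_eq_mul]
        have hik' : i ≠ k := hik
        simp only [hik', ne_eq, not_false_eq_true, true_and, if_true, eq_self_iff_true]
        ring
  have hones : ∀ y : Fin n → ℝ, (Matrix.of fun _ _ => (1:ℝ)) *ᵥ y = (jv ⬝ᵥ y) • jv := by
    intro y
    funext i
    simp [Matrix.mulVec, dotProduct, hjv]
  have hGv : ∀ y : Fin n → ℝ, G *ᵥ y = (α - β) • (M *ᵥ y) + (α * (jv ⬝ᵥ y)) • jv := by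
    intro y
    rw [hGM, Matrix.add_mulVec, Matrix.smul_mulVec, Matrix.smul_mulVec,
      hones y, smul_smul]
  have hquad : ∀ x y : Fin n → ℝ,
      x ⬝ᵥ (G *ᵥ y) = (α - β) * (x ⬝ᵥ (M *ᵥ y)) + α * ((jv ⬝ᵥ y) * (x ⬝ᵥ jv)) := by
    intro x y
    rw [hGv y, dotProduct_add, dotProduct_smul, dotProduct_smul]
    simp [smul_eq_mul]
    ring
  have hGnn : ∀ x : Fin n → ℝ, 0 ≤ x ⬝ᵥ (G *ᵥ x) := by
    intro x
    simpa using hGpsd.dotProduct_mulVec_nonneg x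
  have hMD : ∀ v w : Fin n → ℝ, (M *ᵥ v) ⬝ᵥ w = v ⬝ᵥ (M *ᵥ w) := symmDot M hMsym
  have hGD : ∀ v w : Fin n → ℝ, (G *ᵥ v) ⬝ᵥ w = v ⬝ᵥ (G *ᵥ w) := symmDot G hGsym
  have hcomm : ∀ v w : Fin n → ℝ, v ⬝ᵥ w = w ⬝ᵥ v := fun v w => dotProduct_comm v w
  -- nonnegativity of M's quadratic form on the orthogonal complement of j
  have hMnn : ∀ x : Fin n → ℝ, jv ⬝ᵥ x = 0 → 0 ≤ x ⬝ᵥ (M *ᵥ x) := by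
    intro x hx
    have h1 := hquad x x
    rw [hx] at h1
    have h2 := hGnn x
    nlinarith
  -- a vector with negative quadratic form
  have hxneg : ∃ x : Fin n → ℝ, x ⬝ᵥ (M *ᵥ x) < 0 := by
    rw [Matrix.posSemidef_iff_dotProduct_mulVec] at hnotpsd
    push_neg at hnotpsd
    obtain ⟨x, hx⟩ := hnotpsd hherm
    exact ⟨x, by simpa using hx⟩
  have hn : 0 < n := by
    rcases Nat.eq_zero_or_pos n with h0 | h0
    · exfalso
      obtain ⟨x, hx⟩ := hxneg
      have : x ⬝ᵥ (M *ᵥ x) = 0 := by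
        subst h0
        simp [dotProduct]
      linarith
    · exact h0
  -- kernel vectors are orthogonal to j
  have hker : ∀ z : Fin n → ℝ, M *ᵥ z = 0 → jv ⬝ᵥ z = 0 := by
    intro z hz
    by_contra hc
    obtain ⟨x, hx⟩ := hxneg
    set w : Fin n → ℝ := x - ((jv ⬝ᵥ x) / (jv ⬝ᵥ z)) • z with hw
    have hw0 : jv ⬝ᵥ w = 0 := by
      rw [hw, dotProduct_sub, dotProduct_smul, smul_eq_mul]
      field_simp
      ring
    have h1 : w ⬝ᵥ (M *ᵥ w) = x ⬝ᵥ (M *ᵥ x) := by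
      have hzx : z ⬝ᵥ (M *ᵥ x) = 0 := by
        rw [← hMD z x, hz, zero_dotProduct]
      rw [hw, Matrix.mulVec_sub, Matrix.mulVec_smul, hz, smul_zero, sub_zero,
        sub_dotProduct, smul_dotProduct, hzx, smul_eq_mul, mul_zero, sub_zero]
    have := hMnn w hw0
    rw [h1] at this
    linarith
  -- j is in the column space
  have hjcol : ∃ x : Fin n → ℝ, M *ᵥ x = jv := mem_col_of_ker_orth M hMsym jv hker
  -- eigenvalue facts
  set W : Fin n → Fin n → ℝ := fun i => (hherm.eigenvectorBasis i : Fin n → ℝ) with hWdef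
  have hVV : ∀ i j : Fin n, W i ⬝ᵥ W j = if i = j then 1 else 0 := by
    intro i j
    have horth := hherm.eigenvectorBasis.orthonormal
    rw [orthonormal_iff_ite] at horth
    have h2 := horth i j
    rw [innerDot] at h2
    simpa using h2
  have hMV : ∀ i : Fin n, M *ᵥ W i = hherm.eigenvalues i • W i :=
    fun i => hherm.mulVec_eigenvectorBasis i
  have hex : ∃ i₀, hherm.eigenvalues i₀ < 0 := by
    by_contra hcon
    push_neg at hcon
    exact hnotpsd (hherm.posSemidef_iff_eigenvalues_nonneg.mpr hcon)
  obtain ⟨i₀, hi₀⟩ := hex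
  have hjVzero : ∀ i : Fin n, hherm.eigenvalues i < 0 → jv ⬝ᵥ W i ≠ 0 := by
    intro i hi hc
    have h1 := hMnn _ hc
    rw [hMV i, dotProduct_smul, smul_eq_mul, hVV i i] at h1
    simp at h1
    linarith
  have huniq : ∀ i i' : Fin n, hherm.eigenvalues i < 0 → hherm.eigenvalues i' < 0 → i = i' := by
    intro i i' hi hi'
    by_contra hne
    set s₁ : ℝ := jv ⬝ᵥ W i with hs₁
    set s₂ : ℝ := jv ⬝ᵥ W i' with hs₂
    set x : Fin n → ℝ := s₂ • W i - s₁ • W i' with hx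
    have hx0 : jv ⬝ᵥ x = 0 := by
      rw [hx, dotProduct_sub, dotProduct_smul, dotProduct_smul,
        ← hs₁, ← hs₂, smul_eq_mul, smul_eq_mul]
      ring
    have hne' : ¬ (i' = i) := fun hcc => hne hcc.symm
    have hxq : x ⬝ᵥ (M *ᵥ x) = s₂^2 * hherm.eigenvalues i + s₁^2 * hherm.eigenvalues i' := by
      rw [hx, Matrix.mulVec_sub, Matrix.mulVec_smul, Matrix.mulVec_smul, hMV i, hMV i']
      simp only [sub_dotProduct, dotProduct_sub, smul_dotProduct,
        dotProduct_smul, smul_eq_mul]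
      rw [hVV i i, hVV i' i', hVV i i', hVV i' i]
      simp only [if_pos rfl, hne, hne', if_false, if_true]
      ring
    have hnn := hMnn x hx0
    rw [hxq] at hnn
    have h2 : s₁^2 * hherm.eigenvalues i' = 0 := by
      have hb1 : s₂^2 * hherm.eigenvalues i ≤ 0 := by nlinarith [sq_nonneg s₂]
      have hb2 : s₁^2 * hherm.eigenvalues i' ≤ 0 := by nlinarith [sq_nonneg s₁]
      linarith
    have hs₁0 : s₁ = 0 := by
      rcases mul_eq_zero.mp h2 with h | h
      · exact pow_eq_zero_iff (by norm_num) |>.mp h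
      · linarith
    exact hjVzero i hi hs₁0
  have hcard : (Finset.univ.filter fun i => hherm.eigenvalues i < 0).card = 1 := by
    rw [Finset.card_eq_one]
    refine ⟨i₀, ?_⟩
    ext i
    simp only [Finset.mem_filter, Finset.mem_univ, true_and, Finset.mem_singleton]
    constructor
    · intro hi; exact huniq i i₀ hi hi₀
    · intro hi; rw [hi]; exact hi₀
  -- rank of the Gram matrix
  have hGrank : G.rank = r := by
    rw [hG, Matrix.rank_conjTranspose_mul_self, hB, Matrix.rank_eq_finrank_span_cols]
    have h : Submodule.map
        (WithLp.linearEquiv 2 ℝ (Fin d → ℝ) : EuclideanSpace ℝ (Fin d) →ₗ[ℝ] (Fin d → ℝ))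
        (Submodule.span ℝ (Set.range u))
        = Submodule.span ℝ (Set.range (Matrix.of fun k i => u i k : Matrix (Fin d) (Fin n) ℝ).col) := by
      rw [Submodule.map_span, ← Set.range_comp]
      rfl
    rw [← h, LinearEquiv.finrank_map_eq, hr]
  refine ⟨hcard, hjcol, ?_⟩
  -- part 3
  intro N hN
  obtain ⟨x₀, hx₀⟩ := hjcol
  set t : ℝ := (fun _ => (1:ℝ)) ⬝ᵥ (N *ᵥ fun _ => 1) with ht'
  have htjv : t = jv ⬝ᵥ (N *ᵥ jv) := rfl
  have ht : t = x₀ ⬝ᵥ jv := by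
    rw [htjv]
    conv_lhs => rw [← hx₀]
    rw [hMD x₀ (N *ᵥ (M *ᵥ x₀)), Matrix.mulVec_mulVec, Matrix.mulVec_mulVec, hN, hx₀]
  set κ : ℝ := α * t + (α - β) with hκ
  have hGx₀ : G *ᵥ x₀ = κ • jv := by
    rw [hGv x₀, hx₀, hcomm jv x₀, ← ht, hκ]
    rw [← add_smul]
    ring_nf
  have htq : 0 ≤ κ * t := by
    have h1 := hGnn x₀
    rw [hGx₀, dotProduct_smul, smul_eq_mul, ← ht] at h1
    linarith [h1]
  have ht0 : t ≠ 0 := by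
    intro hc
    have h1 : x₀ ⬝ᵥ (G *ᵥ x₀) = 0 := by
      rw [hGx₀, dotProduct_smul, smul_eq_mul, ← ht, hc, mul_zero]
    have h2 : G *ᵥ x₀ = 0 := by
      have := (hGpsd.dotProduct_mulVec_zero_iff x₀).mp (by simpa using h1)
      exact this
    rw [hGx₀] at h2
    have h3 : κ * 1 = 0 := congrFun h2 ⟨0, hn⟩
    rw [hκ, hc] at h3
    simp at h3
    linarith
  have htneg : t < 0 := by
    rcases lt_trichotomy t 0 with h | h | h
    · exact h
    · exact absurd h ht0
    · exfalso
      apply hnotpsd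
      refine Matrix.PosSemidef.of_dotProduct_mulVec_nonneg hherm fun x => ?_
      have hx : (0:ℝ) ≤ x ⬝ᵥ (M *ᵥ x) := by
        set s : ℝ := jv ⬝ᵥ x with hs
        set w : Fin n → ℝ := x - (s / t) • x₀ with hw
        have hw0 : jv ⬝ᵥ w = 0 := by
          rw [hw, dotProduct_sub, dotProduct_smul, smul_eq_mul, ← hs,
            hcomm jv x₀, ← ht]
          field_simp
          ring
        have hexp : w ⬝ᵥ (M *ᵥ w) = x ⬝ᵥ (M *ᵥ x) - s^2 / t := by
          have hx₀Mx : x₀ ⬝ᵥ (M *ᵥ x) = s := by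
            rw [← hMD x₀ x, hx₀, ← hs]
          have hjx₀ : x₀ ⬝ᵥ jv = t := ht.symm
          rw [hw, Matrix.mulVec_sub, Matrix.mulVec_smul, hx₀, sub_dotProduct,
            smul_dotProduct, dotProduct_sub, dotProduct_sub,
            dotProduct_smul, dotProduct_smul, hx₀Mx, hjx₀, hcomm x jv, ← hs]
          simp only [smul_eq_mul]
          field_simp
          ring
        have := hMnn w hw0
        rw [hexp] at this
        have hst : 0 ≤ s^2 / t := div_nonneg (sq_nonneg s) (le_of_lt h)
        linarith
      simpa using hx
  have hκle : κ ≤ 0 := by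
    by_contra hcon
    push_neg at hcon
    have := mul_neg_of_pos_of_neg hcon htneg
    linarith
  have heqiff : t = (α - β) / (-α) ↔ κ = 0 := by
    rw [hκ]
    have hαne : (-α) ≠ 0 := by linarith
    constructor
    · intro hteq
      have h : t * (-α) = α - β := by rw [hteq]; exact div_mul_cancel₀ _ hαne
      linear_combination -h
    · intro hzero
      rw [eq_div_iff hαne]
      linear_combination -hzero
  have hjx₀t : jv ⬝ᵥ x₀ = t := by rw [hcomm]; exact ht.symm
  have hineq : t ≤ (α - β) / (-α) := by
    have hκle' : α * t + (α - β) ≤ 0 := by rw [← hκ]; exact hκle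
    rw [le_div_iff_of_neg (by linarith : -α < 0)]
    linarith [hκle']
  refine ⟨hineq, ?_⟩
  -- rank computation
  have hrkM := rank_add_ker M
  have hrkG := rank_add_ker G
  have hKMle : ∀ z : Fin n → ℝ, M *ᵥ z = 0 → G *ᵥ z = 0 := by
    intro z hz
    rw [hGv z, hz, hker z hz]
    simp
  have hmemM : ∀ z : Fin n → ℝ, z ∈ LinearMap.ker M.mulVecLin ↔ M *ᵥ z = 0 := fun z => by
    rw [LinearMap.mem_ker, Matrix.mulVecLin_apply]
  have hmemG : ∀ z : Fin n → ℝ, z ∈ LinearMap.ker G.mulVecLin ↔ G *ᵥ z = 0 := fun z => by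
    rw [LinearMap.mem_ker, Matrix.mulVecLin_apply]
  by_cases hκ0 : κ = 0
  · rw [if_pos (heqiff.mpr hκ0)]
    have hκ0' : α * t + (α - β) = 0 := by rw [← hκ]; exact hκ0
    have hx₀ne : x₀ ≠ (0 : Fin n → ℝ) := by
      intro hc
      rw [hc, dotProduct_zero] at hjx₀t
      exact ht0 hjx₀t.symm
    have hGx₀0 : G *ᵥ x₀ = 0 := by rw [hGx₀, hκ0, zero_smul]
    have hsup : LinearMap.ker M.mulVecLin ⊔ Submodule.span ℝ {x₀} = LinearMap.ker G.mulVecLin := by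
      apply le_antisymm
      · apply sup_le
        · intro z hz
          exact (hmemG z).mpr (hKMle z ((hmemM z).mp hz))
        · intro z hz
          obtain ⟨c, hc⟩ := Submodule.mem_span_singleton.mp hz
          rw [hmemG, ← hc, Matrix.mulVec_smul, hGx₀0, smul_zero]
      · intro z hz
        have hgz : G *ᵥ z = 0 := (hmemG z).mp hz
        have h1 : (0 : Fin n → ℝ) = (α - β) • (M *ᵥ z) + (α * (jv ⬝ᵥ z)) • jv := by
          rw [← hgz]; exact hGv z
        have hmz : M *ᵥ z = ((jv ⬝ᵥ z) / t) • jv := by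
          funext k
          have h3 : (0:ℝ) = (α - β) * ((M *ᵥ z) k) + (α * (jv ⬝ᵥ z)) * 1 := by
            simpa [hjv] using congrFun h1 k
          have h2 : t * ((M *ᵥ z) k) = jv ⬝ᵥ z := by
            apply mul_left_cancel₀ (ne_of_gt hα₀)
            linear_combination h3 + ((M *ᵥ z) k) * hκ0'
          show (M *ᵥ z) k = ((jv ⬝ᵥ z) / t) * 1
          rw [mul_one, eq_div_iff ht0]
          linear_combination h2
        have hw : z - ((jv ⬝ᵥ z) / t) • x₀ ∈ LinearMap.ker M.mulVecLin := by
          rw [hmemM, Matrix.mulVec_sub, Matrix.mulVec_smul, hx₀, hmz, sub_self]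
        have hzmem : z = (z - ((jv ⬝ᵥ z) / t) • x₀) + ((jv ⬝ᵥ z) / t) • x₀ := by abel
        rw [hzmem]
        exact Submodule.add_mem_sup hw
          (Submodule.smul_mem _ _ (Submodule.mem_span_singleton_self x₀))
    have hinf : LinearMap.ker M.mulVecLin ⊓ Submodule.span ℝ {x₀} = ⊥ := by
      rw [Submodule.eq_bot_iff]
      rintro z ⟨hz1, hz2⟩
      obtain ⟨c, hc⟩ := Submodule.mem_span_singleton.mp hz2
      have h0 := hker z ((hmemM z).mp hz1)
      rw [← hc, dotProduct_smul, hjx₀t, smul_eq_mul] at h0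
      have hc0 : c = 0 := by
        rcases mul_eq_zero.mp h0 with h | h
        · exact h
        · exact absurd h ht0
      rw [← hc, hc0, zero_smul]
    have hfr := Submodule.finrank_sup_add_finrank_inf_eq
      (LinearMap.ker M.mulVecLin) (Submodule.span ℝ {x₀})
    rw [hsup, hinf, finrank_bot, finrank_span_singleton hx₀ne] at hfr
    rw [hGrank] at hrkG
    omega
  · rw [if_neg (fun hcc => hκ0 (heqiff.mp hcc))]
    have hKeq : LinearMap.ker M.mulVecLin = LinearMap.ker G.mulVecLin := by
      ext z
      rw [hmemM, hmemG]
      constructor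
      · exact hKMle z
      · intro hgz
        have hc0 : jv ⬝ᵥ z = 0 := by
          have h1 : (G *ᵥ x₀) ⬝ᵥ z = 0 := by
            rw [hGD x₀ z, hgz, dotProduct_zero]
          rw [hGx₀, smul_dotProduct, smul_eq_mul] at h1
          rcases mul_eq_zero.mp h1 with h | h
          · exact absurd h hκ0
          · exact h
        have h1 : (0 : Fin n → ℝ) = (α - β) • (M *ᵥ z) + (α * (jv ⬝ᵥ z)) • jv := by
          rw [← hgz]; exact hGv z
        rw [hc0, mul_zero, zero_smul, add_zero] at h1
        have h2 := h1.symm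
        rw [smul_eq_zero] at h2
        rcases h2 with h | h
        · exact absurd h (by linarith)
        · exact h
    have hfr : Module.finrank ℝ (LinearMap.ker M.mulVecLin)
        = Module.finrank ℝ (LinearMap.ker G.mulVecLin) := by rw [hKeq]
    rw [hGrank] at hrkG
    omega
end
end
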